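/- arXiv:2601.20778 — 4 statements merged into one kernel-verified Lean document; each statement's English description precedes it below -/
import Mathlib

section
/- For the T_{333} singularity g = x1^2 + x2^3 + x3^3 + x4^3 + a·x2 x3 x4 with a^3 + 27 ≠ 0, the Tjurina algebra C[[x1,...,x4]]/(g, ∂g/∂x1,...,∂g/∂x4) has dimension 8 over C. -/
open MvPolynomial

/-- The equation of the `T_{333}` singularity with parameter `a`:
`x1^2 + x2^3 + x3^3 + x4^3 + a*x2*x3*x4`. -/
noncomputable def gT333 (a : ℂ) : MvPolynomial (Fin 4) ℂ :=
  X 0 ^ 2 + X 1 ^ 3 + X 2 ^ 3 + X 3 ^ 3 + C a * (X 1 * X 2 * X 3)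

/-- The Tjurina ideal of `gT333 a`. -/
noncomputable def tjurinaT333 (a : ℂ) : Ideal (MvPolynomial (Fin 4) ℂ) :=
  Ideal.span {gT333 a, pderiv 0 (gT333 a), pderiv 1 (gT333 a),
    pderiv 2 (gT333 a), pderiv 3 (gT333 a)}

namespace TjurinaT333Aux

noncomputable abbrev R4 : Type := MvPolynomial (Fin 4) ℂ

/-- standard basis vectors of `Fin 8 → ℂ` -/
noncomputable def tje (t : Fin 8) : Fin 8 → ℂ := Pi.single t 1

/-- Normal-form table: value of the monomial `x2^i x3^j x4^k` in the Tjurina algebra,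
expressed in the basis `1, x2, x3, x4, x2x3, x2x4, x3x4, x2x3x4`; here `c = -a/3`. -/
noncomputable def tjf (c : ℂ) : ℕ → ℕ → ℕ → Fin 8 → ℂ
  | 0,0,0 => tje 0
  | 1,0,0 => tje 1
  | 0,1,0 => tje 2
  | 0,0,1 => tje 3
  | 1,1,0 => tje 4
  | 1,0,1 => tje 5
  | 0,1,1 => tje 6
  | 1,1,1 => tje 7
  | 2,0,0 => c • tje 6
  | 0,2,0 => c • tje 5
  | 0,0,2 => c • tje 4
  | 3,0,0 => c • tje 7
  | 0,3,0 => c • tje 7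
  | 0,0,3 => c • tje 7
  | _,_,_ => 0

lemma tjf_zero (c : ℂ) {i j k : ℕ}
    (h : 4 ≤ i + j + k ∨ (2 ≤ i ∧ 1 ≤ j + k) ∨ (2 ≤ j ∧ 1 ≤ i + k) ∨ (2 ≤ k ∧ 1 ≤ i + j)) :
    tjf c i j k = 0 := by
  rcases i with _|_|_|_|i <;> rcases j with _|_|_|_|j <;> rcases k with _|_|_|_|k <;>
    first | rfl | omega

lemma tjf000 (c : ℂ) : tjf c 0 0 0 = tje 0 := rfl
lemma tjf100 (c : ℂ) : tjf c 1 0 0 = tje 1 := rfl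
lemma tjf010 (c : ℂ) : tjf c 0 1 0 = tje 2 := rfl
lemma tjf001 (c : ℂ) : tjf c 0 0 1 = tje 3 := rfl
lemma tjf110 (c : ℂ) : tjf c 1 1 0 = tje 4 := rfl
lemma tjf101 (c : ℂ) : tjf c 1 0 1 = tje 5 := rfl
lemma tjf011 (c : ℂ) : tjf c 0 1 1 = tje 6 := rfl
lemma tjf111 (c : ℂ) : tjf c 1 1 1 = tje 7 := rfl
lemma tjf200 (c : ℂ) : tjf c 2 0 0 = c • tje 6 := rfl
lemma tjf020 (c : ℂ) : tjf c 0 2 0 = c • tje 5 := rfl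
lemma tjf002 (c : ℂ) : tjf c 0 0 2 = c • tje 4 := rfl
lemma tjf300 (c : ℂ) : tjf c 3 0 0 = c • tje 7 := rfl
lemma tjf030 (c : ℂ) : tjf c 0 3 0 = c • tje 7 := rfl
lemma tjf003 (c : ℂ) : tjf c 0 0 3 = c • tje 7 := rfl

lemma tjJ1 (a : ℂ) (i j k : ℕ) :
    (3:ℂ) • tjf (-(a/3)) (i+2) j k + a • tjf (-(a/3)) i (j+1) (k+1) = 0 := by
  rcases i with _|_|i <;> rcases j with _|j <;> rcases k with _|k <;>
    first
      | (rw [tjf_zero _ (by omega), tjf_zero _ (by omega)]; simp)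
      | (rw [tjf200, tjf011]; module)
      | (rw [tjf300, tjf111]; module)

lemma tjJ2 (a : ℂ) (i j k : ℕ) :
    (3:ℂ) • tjf (-(a/3)) i (j+2) k + a • tjf (-(a/3)) (i+1) j (k+1) = 0 := by
  rcases i with _|_|i <;> rcases j with _|_|j <;> rcases k with _|_|k <;>
    first
      | (rw [tjf_zero _ (by omega), tjf_zero _ (by omega)]; simp)
      | (rw [tjf020, tjf101]; module)
      | (rw [tjf030, tjf111]; module)

lemma tjJ3 (a : ℂ) (i j k : ℕ) :
    (3:ℂ) • tjf (-(a/3)) i j (k+2) + a • tjf (-(a/3)) (i+1) (j+1) k = 0 := by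
  rcases i with _|_|i <;> rcases j with _|_|j <;> rcases k with _|_|k <;>
    first
      | (rw [tjf_zero _ (by omega), tjf_zero _ (by omega)]; simp)
      | (rw [tjf002, tjf110]; module)
      | (rw [tjf003, tjf111]; module)

lemma tjJg (a : ℂ) (i j k : ℕ) :
    tjf (-(a/3)) (i+3) j k + tjf (-(a/3)) i (j+3) k + tjf (-(a/3)) i j (k+3)
      + a • tjf (-(a/3)) (i+1) (j+1) (k+1) = 0 := by
  rcases i with _|i <;> rcases j with _|j <;> rcases k with _|k <;>
    first
      | (rw [tjf_zero _ (by omega), tjf_zero _ (by omega), tjf_zero _ (by omega),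
            tjf_zero _ (by omega)]; simp)
      | (rw [tjf300, tjf030, tjf003, tjf111]; module)

/-- normal form on exponents -/
noncomputable def tjnf (c : ℂ) (u : Fin 4 →₀ ℕ) : Fin 8 → ℂ :=
  if u 0 = 0 then tjf c (u 1) (u 2) (u 3) else 0

/-- The normal form linear map. -/
noncomputable def NF (c : ℂ) : R4 →ₗ[ℂ] (Fin 8 → ℂ) :=
  (basisMonomials (Fin 4) ℂ).constr ℂ (tjnf c)

lemma NF_monomial (c : ℂ) (u : Fin 4 →₀ ℕ) : NF c (monomial u 1) = tjnf c u := by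
  have h := Module.Basis.constr_basis (basisMonomials (Fin 4) ℂ) ℂ (tjnf c) u
  rwa [coe_basisMonomials] at h

lemma tjnf_add (c : ℂ) (u v : Fin 4 →₀ ℕ) :
    tjnf c (u + v) =
      if u 0 + v 0 = 0 then tjf c (u 1 + v 1) (u 2 + v 2) (u 3 + v 3) else 0 := by
  simp [tjnf, Finsupp.add_apply]

lemma X_eq_mono (i : Fin 4) : (X i : R4) = monomial (Finsupp.single i 1) 1 := rfl

lemma one_eq_mono : (1 : R4) = monomial 0 1 := by
  rw [monomial_zero', C_1]
lemma mono_mul_X (u : Fin 4 →₀ ℕ) (i : Fin 4) :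
    monomial u (1:ℂ) * X i = monomial (u + Finsupp.single i 1) 1 := by
  rw [X_eq_mono, monomial_mul, mul_one]

lemma mono_mul_X_pow (u : Fin 4 →₀ ℕ) (i : Fin 4) (n : ℕ) :
    monomial u (1:ℂ) * X i ^ n = monomial (u + Finsupp.single i n) 1 := by
  rw [X_pow_eq_monomial, monomial_mul, mul_one]

lemma mono_mul_XX (u : Fin 4 →₀ ℕ) (i j : Fin 4) :
    monomial u (1:ℂ) * (X i * X j) = monomial (u + (Finsupp.single i 1 + Finsupp.single j 1)) 1 := by
  rw [X_eq_mono, X_eq_mono, monomial_mul, mul_one, monomial_mul, mul_one]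

lemma sing_apply (i t : Fin 4) (n : ℕ) :
    (Finsupp.single i n : Fin 4 →₀ ℕ) t = if i = t then n else 0 := Finsupp.single_apply

lemma NF_mono_d1 (a : ℂ) (u : Fin 4 →₀ ℕ) :
    NF (-(a/3)) (monomial u 1 * (C 3 * X 1 ^ 2 + C a * (X 2 * X 3))) = 0 := by
  have h : monomial u (1:ℂ) * (C 3 * X 1 ^ 2 + C a * (X 2 * X 3)) =
      (3:ℂ) • (monomial u 1 * X 1 ^ 2) + a • (monomial u 1 * (X 2 * X 3)) := by
    rw [smul_eq_C_mul, smul_eq_C_mul]; ring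
  rw [h, mono_mul_X_pow, mono_mul_XX, map_add, map_smul, map_smul,
    NF_monomial, NF_monomial, tjnf_add, tjnf_add]
  by_cases h0 : u 0 = 0
  · simp only [Finsupp.add_apply, sing_apply, h0]
    norm_num
    exact tjJ1 a _ _ _
  · simp [Finsupp.add_apply, sing_apply, h0]

lemma NF_mono_d0 (a : ℂ) (u : Fin 4 →₀ ℕ) :
    NF (-(a/3)) (monomial u 1 * (C 2 * X 0)) = 0 := by
  have h : monomial u (1:ℂ) * (C 2 * X 0) = (2:ℂ) • (monomial u 1 * X 0) := by
    rw [smul_eq_C_mul]; ring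
  rw [h, mono_mul_X, map_smul, NF_monomial, tjnf_add]
  simp [sing_apply]

lemma NF_mono_d2 (a : ℂ) (u : Fin 4 →₀ ℕ) :
    NF (-(a/3)) (monomial u 1 * (C 3 * X 2 ^ 2 + C a * (X 1 * X 3))) = 0 := by
  have h : monomial u (1:ℂ) * (C 3 * X 2 ^ 2 + C a * (X 1 * X 3)) =
      (3:ℂ) • (monomial u 1 * X 2 ^ 2) + a • (monomial u 1 * (X 1 * X 3)) := by
    rw [smul_eq_C_mul, smul_eq_C_mul]; ring
  rw [h, mono_mul_X_pow, mono_mul_XX, map_add, map_smul, map_smul,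
    NF_monomial, NF_monomial, tjnf_add, tjnf_add]
  by_cases h0 : u 0 = 0
  · simp only [Finsupp.add_apply, sing_apply, h0]
    norm_num
    exact tjJ2 a _ _ _
  · simp [Finsupp.add_apply, sing_apply, h0]

lemma NF_mono_d3 (a : ℂ) (u : Fin 4 →₀ ℕ) :
    NF (-(a/3)) (monomial u 1 * (C 3 * X 3 ^ 2 + C a * (X 1 * X 2))) = 0 := by
  have h : monomial u (1:ℂ) * (C 3 * X 3 ^ 2 + C a * (X 1 * X 2)) =
      (3:ℂ) • (monomial u 1 * X 3 ^ 2) + a • (monomial u 1 * (X 1 * X 2)) := by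
    rw [smul_eq_C_mul, smul_eq_C_mul]; ring
  rw [h, mono_mul_X_pow, mono_mul_XX, map_add, map_smul, map_smul,
    NF_monomial, NF_monomial, tjnf_add, tjnf_add]
  by_cases h0 : u 0 = 0
  · simp only [Finsupp.add_apply, sing_apply, h0]
    norm_num
    exact tjJ3 a _ _ _
  · simp [Finsupp.add_apply, sing_apply, h0]

lemma mono_mul_XXX (u : Fin 4 →₀ ℕ) (i j k : Fin 4) :
    monomial u (1:ℂ) * (X i * X j * X k)
      = monomial (u + (Finsupp.single i 1 + Finsupp.single j 1 + Finsupp.single k 1)) 1 := by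
  rw [X_eq_mono, X_eq_mono, X_eq_mono, monomial_mul, mul_one, monomial_mul, mul_one,
    monomial_mul, mul_one]

lemma NF_mono_g (a : ℂ) (u : Fin 4 →₀ ℕ) :
    NF (-(a/3)) (monomial u 1 * gT333 a) = 0 := by
  have h : monomial u (1:ℂ) * gT333 a =
      monomial u 1 * X 0 ^ 2 + monomial u 1 * X 1 ^ 3 + monomial u 1 * X 2 ^ 3
        + monomial u 1 * X 3 ^ 3 + a • (monomial u 1 * (X 1 * X 2 * X 3)) := by
    rw [smul_eq_C_mul, gT333]; ring
  rw [h, mono_mul_X_pow, mono_mul_X_pow, mono_mul_X_pow, mono_mul_X_pow, mono_mul_XXX,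
    map_add, map_add, map_add, map_add, map_smul, NF_monomial, NF_monomial,
    NF_monomial, NF_monomial, NF_monomial, tjnf_add, tjnf_add, tjnf_add, tjnf_add, tjnf_add]
  by_cases h0 : u 0 = 0
  · simp only [Finsupp.add_apply, sing_apply, h0]
    norm_num
    exact tjJg a _ _ _
  · simp [Finsupp.add_apply, sing_apply, h0]

/-- `NF` kills every multiple of the generators. -/
lemma NF_mul_gen (a : ℂ) (G : R4)
    (hG : ∀ u : Fin 4 →₀ ℕ, NF (-(a/3)) (monomial u 1 * G) = 0) (p : R4) :
    NF (-(a/3)) (p * G) = 0 := by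
  induction p using MvPolynomial.induction_on' with
  | monomial u r =>
    have h : (monomial u r : R4) = r • monomial u 1 := by
      rw [smul_monomial, smul_eq_mul, mul_one]
    rw [h, smul_mul_assoc, map_smul, hG, smul_zero]
  | add p q hp hq => rw [add_mul, map_add, hp, hq, add_zero]

/-- Derivative computations. -/
lemma dg0 (a : ℂ) : pderiv 0 (gT333 a) = C 2 * X 0 := by
  have h2 : (C (2:ℂ) : R4) = 2 := map_ofNat _ 2
  rw [h2]
  simp only [gT333, map_add, pderiv_pow, pderiv_C_mul, pderiv_mul, pderiv_X_self, pderiv_C,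
    pderiv_X_of_ne (by decide : (1:Fin 4) ≠ 0), pderiv_X_of_ne (by decide : (2:Fin 4) ≠ 0),
    pderiv_X_of_ne (by decide : (3:Fin 4) ≠ 0)]
  ring

lemma dg1 (a : ℂ) : pderiv 1 (gT333 a) = C 3 * X 1 ^ 2 + C a * (X 2 * X 3) := by
  have h3 : (C (3:ℂ) : R4) = 3 := map_ofNat _ 3
  rw [h3]
  simp only [gT333, map_add, pderiv_pow, pderiv_C_mul, pderiv_mul, pderiv_X_self, pderiv_C,
    pderiv_X_of_ne (by decide : (0:Fin 4) ≠ 1), pderiv_X_of_ne (by decide : (2:Fin 4) ≠ 1),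
    pderiv_X_of_ne (by decide : (3:Fin 4) ≠ 1)]
  ring

lemma dg2 (a : ℂ) : pderiv 2 (gT333 a) = C 3 * X 2 ^ 2 + C a * (X 1 * X 3) := by
  have h3 : (C (3:ℂ) : R4) = 3 := map_ofNat _ 3
  rw [h3]
  simp only [gT333, map_add, pderiv_pow, pderiv_C_mul, pderiv_mul, pderiv_X_self, pderiv_C,
    pderiv_X_of_ne (by decide : (0:Fin 4) ≠ 2), pderiv_X_of_ne (by decide : (1:Fin 4) ≠ 2),
    pderiv_X_of_ne (by decide : (3:Fin 4) ≠ 2)]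
  ring

lemma dg3 (a : ℂ) : pderiv 3 (gT333 a) = C 3 * X 3 ^ 2 + C a * (X 1 * X 2) := by
  have h3 : (C (3:ℂ) : R4) = 3 := map_ofNat _ 3
  rw [h3]
  simp only [gT333, map_add, pderiv_pow, pderiv_C_mul, pderiv_mul, pderiv_X_self, pderiv_C,
    pderiv_X_of_ne (by decide : (0:Fin 4) ≠ 3), pderiv_X_of_ne (by decide : (1:Fin 4) ≠ 3),
    pderiv_X_of_ne (by decide : (2:Fin 4) ≠ 3)]
  ring

/-- `NF` vanishes on the Tjurina ideal. -/
lemma NF_ideal (a : ℂ) {p : R4} (hp : p ∈ tjurinaT333 a) : NF (-(a/3)) p = 0 := by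
  have key : ∀ G ∈ ({gT333 a, pderiv 0 (gT333 a), pderiv 1 (gT333 a), pderiv 2 (gT333 a),
      pderiv 3 (gT333 a)} : Set R4), ∀ r : R4, NF (-(a/3)) (r * G) = 0 := by
    intro G hG r
    simp only [Set.mem_insert_iff, Set.mem_singleton_iff] at hG
    rcases hG with rfl | rfl | rfl | rfl | rfl
    · exact NF_mul_gen a _ (NF_mono_g a) r
    · rw [dg0]; exact NF_mul_gen a _ (NF_mono_d0 a) r
    · rw [dg1]; exact NF_mul_gen a _ (NF_mono_d1 a) r
    · rw [dg2]; exact NF_mul_gen a _ (NF_mono_d2 a) r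
    · rw [dg3]; exact NF_mul_gen a _ (NF_mono_d3 a) r
  have h := Submodule.span_induction
    (p := fun (x : R4) (_ : x ∈ tjurinaT333 a) => ∀ r : R4, NF (-(a/3)) (r * x) = 0)
    (fun x hx => key x hx)
    (fun r => by rw [mul_zero, map_zero])
    (fun x y _ _ hx hy r => by rw [mul_add, map_add, hx, hy, add_zero])
    (fun s x _ hx r => by rw [smul_eq_mul, ← mul_assoc]; exact hx (r * s))
    hp
  simpa using h 1

lemma mem_of_C_mul {r : ℂ} (hr : r ≠ 0) {p : R4} {I : Ideal R4} (h : C r * p ∈ I) : p ∈ I := by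
  have hp : p = C r⁻¹ * (C r * p) := by
    rw [← mul_assoc, ← C_mul, inv_mul_cancel₀ hr, C_1, one_mul]
  rw [hp]
  exact I.mul_mem_left _ h

lemma mem_g (a : ℂ) : gT333 a ∈ tjurinaT333 a :=
  Ideal.subset_span (by simp)
lemma mem_d1 (a : ℂ) : C 3 * X 1 ^ 2 + C a * (X 2 * X 3) ∈ tjurinaT333 a := by
  rw [← dg1]; exact Ideal.subset_span (by simp)
lemma mem_d2 (a : ℂ) : C 3 * X 2 ^ 2 + C a * (X 1 * X 3) ∈ tjurinaT333 a := by
  rw [← dg2]; exact Ideal.subset_span (by simp)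
lemma mem_d3 (a : ℂ) : C 3 * X 3 ^ 2 + C a * (X 1 * X 2) ∈ tjurinaT333 a := by
  rw [← dg3]; exact Ideal.subset_span (by simp)

lemma mem_X0 (a : ℂ) : (X 0 : R4) ∈ tjurinaT333 a := by
  apply mem_of_C_mul (r := 2) two_ne_zero
  have h : (C 2 * X 0 : R4) = pderiv 0 (gT333 a) := (dg0 a).symm
  rw [h]
  exact Ideal.subset_span (by simp)

/-- the six certificates : squares times another variable lie in the ideal -/
lemma mem_sq_mul (a : ℂ) (ha : a ^ 3 + 27 ≠ 0) (i j : Fin 4)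
    (hij : (i,j) ∈ ({(1,2),(1,3),(2,1),(2,3),(3,1),(3,2)} : Set (Fin 4 × Fin 4))) :
    (X i ^ 2 * X j : R4) ∈ tjurinaT333 a := by
  have ha' : (27 + a ^ 3 : ℂ) ≠ 0 := by
    intro h; apply ha; rw [← h]; ring
  have h1 := mem_d1 a; have h2 := mem_d2 a; have h3 := mem_d3 a
  set I := tjurinaT333 a
  apply mem_of_C_mul ha'
  simp only [Set.mem_insert_iff, Set.mem_singleton_iff, Prod.mk.injEq] at hij
  rcases hij with ⟨hi, hj⟩ | ⟨hi, hj⟩ | ⟨hi, hj⟩ | ⟨hi, hj⟩ | ⟨hi, hj⟩ | ⟨hi, hj⟩ <;>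
      subst hi <;> subst hj
  · have e : C (27 + a^3) * (X 1 ^ 2 * X 2 : R4) =
        (C 9 * X 2) * (C 3 * X 1 ^ 2 + C a * (X 2 * X 3))
        + (-(C 3 * C a * X 3)) * (C 3 * X 2 ^ 2 + C a * (X 1 * X 3))
        + (C a ^ 2 * X 1) * (C 3 * X 3 ^ 2 + C a * (X 1 * X 2)) := by
      simp only [map_add, map_mul, map_pow, map_ofNat]
      ring
    rw [e]
    exact add_mem (add_mem (I.mul_mem_left _ h1) (I.mul_mem_left _ h2)) (I.mul_mem_left _ h3)
  · have e : C (27 + a^3) * (X 1 ^ 2 * X 3 : R4) =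
        (C 9 * X 3) * (C 3 * X 1 ^ 2 + C a * (X 2 * X 3))
        + (-(C 3 * C a * X 2)) * (C 3 * X 3 ^ 2 + C a * (X 1 * X 2))
        + (C a ^ 2 * X 1) * (C 3 * X 2 ^ 2 + C a * (X 1 * X 3)) := by
      simp only [map_add, map_mul, map_pow, map_ofNat]
      ring
    rw [e]
    exact add_mem (add_mem (I.mul_mem_left _ h1) (I.mul_mem_left _ h3)) (I.mul_mem_left _ h2)
  · have e : C (27 + a^3) * (X 2 ^ 2 * X 1 : R4) =
        (C 9 * X 1) * (C 3 * X 2 ^ 2 + C a * (X 1 * X 3))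
        + (-(C 3 * C a * X 3)) * (C 3 * X 1 ^ 2 + C a * (X 2 * X 3))
        + (C a ^ 2 * X 2) * (C 3 * X 3 ^ 2 + C a * (X 1 * X 2)) := by
      simp only [map_add, map_mul, map_pow, map_ofNat]
      ring
    rw [e]
    exact add_mem (add_mem (I.mul_mem_left _ h2) (I.mul_mem_left _ h1)) (I.mul_mem_left _ h3)
  · have e : C (27 + a^3) * (X 2 ^ 2 * X 3 : R4) =
        (C 9 * X 3) * (C 3 * X 2 ^ 2 + C a * (X 1 * X 3))
        + (-(C 3 * C a * X 1)) * (C 3 * X 3 ^ 2 + C a * (X 1 * X 2))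
        + (C a ^ 2 * X 2) * (C 3 * X 1 ^ 2 + C a * (X 2 * X 3)) := by
      simp only [map_add, map_mul, map_pow, map_ofNat]
      ring
    rw [e]
    exact add_mem (add_mem (I.mul_mem_left _ h2) (I.mul_mem_left _ h3)) (I.mul_mem_left _ h1)
  · have e : C (27 + a^3) * (X 3 ^ 2 * X 1 : R4) =
        (C 9 * X 1) * (C 3 * X 3 ^ 2 + C a * (X 1 * X 2))
        + (-(C 3 * C a * X 2)) * (C 3 * X 1 ^ 2 + C a * (X 2 * X 3))
        + (C a ^ 2 * X 3) * (C 3 * X 2 ^ 2 + C a * (X 1 * X 3)) := by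
      simp only [map_add, map_mul, map_pow, map_ofNat]
      ring
    rw [e]
    exact add_mem (add_mem (I.mul_mem_left _ h3) (I.mul_mem_left _ h1)) (I.mul_mem_left _ h2)
  · have e : C (27 + a^3) * (X 3 ^ 2 * X 2 : R4) =
        (C 9 * X 2) * (C 3 * X 3 ^ 2 + C a * (X 1 * X 2))
        + (-(C 3 * C a * X 1)) * (C 3 * X 2 ^ 2 + C a * (X 1 * X 3))
        + (C a ^ 2 * X 3) * (C 3 * X 1 ^ 2 + C a * (X 2 * X 3)) := by
      simp only [map_add, map_mul, map_pow, map_ofNat]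
      ring
    rw [e]
    exact add_mem (add_mem (I.mul_mem_left _ h3) (I.mul_mem_left _ h2)) (I.mul_mem_left _ h1)

/-- The monomials whose classes form a basis of the Tjurina algebra. -/
noncomputable def mList : Fin 8 → R4 :=
  ![1, X 1, X 2, X 3, X 1 * X 2, X 1 * X 3, X 2 * X 3, X 1 * X 2 * X 3]

lemma NF_one (c : ℂ) : NF c 1 = tje 0 := by
  rw [one_eq_mono, NF_monomial]
  simp [tjnf, tjf000]

lemma NF_X1 (c : ℂ) : NF c (X 1) = tje 1 := by
  rw [X_eq_mono, NF_monomial]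
  simp [tjnf, sing_apply, tjf100]

lemma NF_X2 (c : ℂ) : NF c (X 2) = tje 2 := by
  rw [X_eq_mono, NF_monomial]
  simp [tjnf, sing_apply, tjf010]

lemma NF_X3 (c : ℂ) : NF c (X 3) = tje 3 := by
  rw [X_eq_mono, NF_monomial]
  simp [tjnf, sing_apply, tjf001]

lemma NF_X1X2 (c : ℂ) : NF c (X 1 * X 2) = tje 4 := by
  rw [← one_mul (X 1 * X 2), one_eq_mono, mono_mul_XX, NF_monomial]
  simp [tjnf, Finsupp.add_apply, sing_apply, tjf110]

lemma NF_X1X3 (c : ℂ) : NF c (X 1 * X 3) = tje 5 := by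
  rw [← one_mul (X 1 * X 3), one_eq_mono, mono_mul_XX, NF_monomial]
  simp [tjnf, Finsupp.add_apply, sing_apply, tjf101]

lemma NF_X2X3 (c : ℂ) : NF c (X 2 * X 3) = tje 6 := by
  rw [← one_mul (X 2 * X 3), one_eq_mono, mono_mul_XX, NF_monomial]
  simp [tjnf, Finsupp.add_apply, sing_apply, tjf011]

lemma NF_X1X2X3 (c : ℂ) : NF c (X 1 * X 2 * X 3) = tje 7 := by
  rw [← one_mul (X 1 * X 2 * X 3), one_eq_mono,
    show (X 1 * X 2 * X 3 : R4) = X 1 * X 2 * X 3 from rfl, mono_mul_XXX, NF_monomial]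
  simp [tjnf, Finsupp.add_apply, sing_apply, tjf111]

lemma NF_mList (c : ℂ) (t : Fin 8) : NF c (mList t) = tje t := by
  fin_cases t
  · exact NF_one c
  · exact NF_X1 c
  · exact NF_X2 c
  · exact NF_X3 c
  · exact NF_X1X2 c
  · exact NF_X1X3 c
  · exact NF_X2X3 c
  · exact NF_X1X2X3 c

lemma mk_C_smul {I : Ideal R4} (r : ℂ) (q : R4 ⧸ I) :
    Ideal.Quotient.mk I (C r) * q = r • q := by
  rw [show (C r : R4) = algebraMap ℂ _ r from rfl,
    ← Ideal.Quotient.algebraMap_eq, ← IsScalarTower.algebraMap_apply]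
  exact (Algebra.smul_def r q).symm

lemma mk_C_mul {I : Ideal R4} (r : ℂ) (p : R4) :
    Ideal.Quotient.mk I (C r * p) = r • Ideal.Quotient.mk I p := by
  rw [map_mul, mk_C_smul]

lemma mk_smul {I : Ideal R4} (r : ℂ) (p : R4) :
    Ideal.Quotient.mk I (r • p) = r • Ideal.Quotient.mk I p := by
  rw [smul_eq_C_mul, mk_C_mul]

lemma sq_rel (a : ℂ) {p q : R4} (h : C 3 * p + C a * q ∈ tjurinaT333 a) :
    Ideal.Quotient.mk (tjurinaT333 a) p
      = (-(a/3)) • Ideal.Quotient.mk (tjurinaT333 a) q := by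
  have hCa : (C (3:ℂ) : R4) * C (-(a/3)) = - C a := by
    rw [← C_mul, show (3:ℂ) * -(a/3) = -a by ring, map_neg]
  have e : C 3 * (p - C (-(a/3)) * q) = C 3 * p + C a * q := by
    rw [mul_sub, ← mul_assoc, hCa]; ring
  have hmem : p - C (-(a/3)) * q ∈ tjurinaT333 a :=
    mem_of_C_mul (by norm_num : (3:ℂ) ≠ 0) (e ▸ h)
  have := Ideal.Quotient.eq.mpr hmem
  rw [this, mk_C_mul]

end TjurinaT333Aux

open TjurinaT333Aux in
/-- For `a^3 + 27 ≠ 0`, the Tjurina algebra of the `T_{333}` singularity has dimension 8. -/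
theorem tjurina_T333 (a : ℂ) (ha : a ^ 3 + 27 ≠ 0) :
    Module.finrank ℂ (MvPolynomial (Fin 4) ℂ ⧸ tjurinaT333 a) = 8 := by
  classical
  set π := Ideal.Quotient.mk (tjurinaT333 a) with hπ
  set b : Fin 8 → (MvPolynomial (Fin 4) ℂ ⧸ tjurinaT333 a) := fun t => π (mList t) with hb
  -- linear independence
  have li : LinearIndependent ℂ b := by
    rw [Fintype.linearIndependent_iff]
    intro g hg t
    have hmem : (∑ i, g i • mList i) ∈ tjurinaT333 a := by
      rw [← Ideal.Quotient.eq_zero_iff_mem]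
      have hmk : Ideal.Quotient.mk (tjurinaT333 a) (∑ i, g i • mList i) = ∑ i, g i • b i := by
        rw [map_sum]
        exact Finset.sum_congr rfl fun i _ => mk_smul _ _
      rw [hmk, hg]
    have h0 := NF_ideal a hmem
    rw [map_sum] at h0
    simp only [map_smul, NF_mList] at h0
    have h1 := congrFun h0 t
    simpa [tje, Pi.single_apply] using h1
  -- spanning
  set M := Submodule.span ℂ (Set.range b) with hM
  have hbM : ∀ t, b t ∈ M := fun t => Submodule.subset_span ⟨t, rfl⟩
  have hzero : ∀ p : R4, p ∈ tjurinaT333 a → π p ∈ M := fun p h => by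
    rw [hπ, Ideal.Quotient.eq_zero_iff_mem.mpr h]; exact M.zero_mem
  have hsq1 : π (X 1 * X 1) = (-(a/3)) • π (X 2 * X 3) := by
    rw [hπ]; exact sq_rel a (by rw [← pow_two]; exact mem_d1 a)
  have hsq2 : π (X 2 * X 2) = (-(a/3)) • π (X 1 * X 3) := by
    rw [hπ]; exact sq_rel a (by rw [← pow_two]; exact mem_d2 a)
  have hsq3 : π (X 3 * X 3) = (-(a/3)) • π (X 1 * X 2) := by
    rw [hπ]; exact sq_rel a (by rw [← pow_two]; exact mem_d3 a)
  have hprod : ∀ (i : Fin 4) (t : Fin 8), π (X i * mList t) ∈ M := by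
    intro i t
    fin_cases i <;> fin_cases t
    -- i = 0 row
    · exact hzero _ (Ideal.mul_mem_right _ _ (mem_X0 a))
    · exact hzero _ (Ideal.mul_mem_right _ _ (mem_X0 a))
    · exact hzero _ (Ideal.mul_mem_right _ _ (mem_X0 a))
    · exact hzero _ (Ideal.mul_mem_right _ _ (mem_X0 a))
    · exact hzero _ (Ideal.mul_mem_right _ _ (mem_X0 a))
    · exact hzero _ (Ideal.mul_mem_right _ _ (mem_X0 a))
    · exact hzero _ (Ideal.mul_mem_right _ _ (mem_X0 a))
    · exact hzero _ (Ideal.mul_mem_right _ _ (mem_X0 a))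
    -- i = 1 row
    · show π (X 1 * 1) ∈ M
      rw [mul_one]; exact hbM 1
    · show π (X 1 * X 1) ∈ M
      rw [hsq1]; exact M.smul_mem _ (hbM 6)
    · exact hbM 4
    · exact hbM 5
    · show π (X 1 * (X 1 * X 2)) ∈ M
      refine hzero _ ?_
      rw [show (X 1 * (X 1 * X 2) : R4) = X 1 ^ 2 * X 2 by ring]
      exact mem_sq_mul a ha 1 2 (by simp)
    · show π (X 1 * (X 1 * X 3)) ∈ M
      refine hzero _ ?_
      rw [show (X 1 * (X 1 * X 3) : R4) = X 1 ^ 2 * X 3 by ring]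
      exact mem_sq_mul a ha 1 3 (by simp)
    · show π (X 1 * (X 2 * X 3)) ∈ M
      rw [← mul_assoc]; exact hbM 7
    · show π (X 1 * (X 1 * X 2 * X 3)) ∈ M
      refine hzero _ ?_
      rw [show (X 1 * (X 1 * X 2 * X 3) : R4) = (X 1 ^ 2 * X 2) * X 3 by ring]
      exact Ideal.mul_mem_right _ _ (mem_sq_mul a ha 1 2 (by simp))
    -- i = 2 row
    · show π (X 2 * 1) ∈ M
      rw [mul_one]; exact hbM 2
    · show π (X 2 * X 1) ∈ M
      rw [mul_comm]; exact hbM 4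
    · show π (X 2 * X 2) ∈ M
      rw [hsq2]; exact M.smul_mem _ (hbM 5)
    · exact hbM 6
    · show π (X 2 * (X 1 * X 2)) ∈ M
      refine hzero _ ?_
      rw [show (X 2 * (X 1 * X 2) : R4) = X 2 ^ 2 * X 1 by ring]
      exact mem_sq_mul a ha 2 1 (by simp)
    · show π (X 2 * (X 1 * X 3)) ∈ M
      rw [show (X 2 * (X 1 * X 3) : R4) = X 1 * X 2 * X 3 by ring]; exact hbM 7
    · show π (X 2 * (X 2 * X 3)) ∈ M
      refine hzero _ ?_
      rw [show (X 2 * (X 2 * X 3) : R4) = X 2 ^ 2 * X 3 by ring]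
      exact mem_sq_mul a ha 2 3 (by simp)
    · show π (X 2 * (X 1 * X 2 * X 3)) ∈ M
      refine hzero _ ?_
      rw [show (X 2 * (X 1 * X 2 * X 3) : R4) = (X 2 ^ 2 * X 1) * X 3 by ring]
      exact Ideal.mul_mem_right _ _ (mem_sq_mul a ha 2 1 (by simp))
    -- i = 3 row
    · show π (X 3 * 1) ∈ M
      rw [mul_one]; exact hbM 3
    · show π (X 3 * X 1) ∈ M
      rw [mul_comm]; exact hbM 5
    · show π (X 3 * X 2) ∈ M
      rw [mul_comm]; exact hbM 6
    · show π (X 3 * X 3) ∈ M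
      rw [hsq3]; exact M.smul_mem _ (hbM 4)
    · show π (X 3 * (X 1 * X 2)) ∈ M
      rw [show (X 3 * (X 1 * X 2) : R4) = X 1 * X 2 * X 3 by ring]; exact hbM 7
    · show π (X 3 * (X 1 * X 3)) ∈ M
      refine hzero _ ?_
      rw [show (X 3 * (X 1 * X 3) : R4) = X 3 ^ 2 * X 1 by ring]
      exact mem_sq_mul a ha 3 1 (by simp)
    · show π (X 3 * (X 2 * X 3)) ∈ M
      refine hzero _ ?_
      rw [show (X 3 * (X 2 * X 3) : R4) = X 3 ^ 2 * X 2 by ring]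
      exact mem_sq_mul a ha 3 2 (by simp)
    · show π (X 3 * (X 1 * X 2 * X 3)) ∈ M
      refine hzero _ ?_
      rw [show (X 3 * (X 1 * X 2 * X 3) : R4) = (X 3 ^ 2 * X 1) * X 2 by ring]
      exact Ideal.mul_mem_right _ _ (mem_sq_mul a ha 3 1 (by simp))
  have hXq : ∀ (i : Fin 4), ∀ q ∈ M, π (X i) * q ∈ M := by
    intro i q hq
    induction hq using Submodule.span_induction with
    | mem x hx =>
      obtain ⟨t, rfl⟩ := hx
      rw [show π (X i) * b t = π (X i * mList t) from (map_mul π _ _).symm]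
      exact hprod i t
    | zero => rw [mul_zero]; exact M.zero_mem
    | add x y _ _ hx hy => rw [mul_add]; exact M.add_mem hx hy
    | smul r x _ hx => rw [mul_smul_comm]; exact M.smul_mem r hx
  have hall : ∀ p : R4, ∀ q ∈ M, π p * q ∈ M := by
    intro p
    induction p using MvPolynomial.induction_on with
    | C r =>
      intro q hq
      rw [show π (C r) * q = r • q from mk_C_smul r q]
      exact M.smul_mem r hq
    | add p1 p2 h1 h2 =>
      intro q hq
      rw [map_add, add_mul]
      exact M.add_mem (h1 q hq) (h2 q hq)
    | mul_X p i hp =>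
      intro q hq
      rw [map_mul, mul_assoc]
      exact hp _ (hXq i q hq)
  have htop : ⊤ ≤ M := by
    intro q _
    obtain ⟨p, rfl⟩ := Ideal.Quotient.mk_surjective q
    have h1 : (1 : MvPolynomial (Fin 4) ℂ ⧸ tjurinaT333 a) ∈ M := by
      have := hbM 0
      simpa [hb, mList] using this
    have h2 := hall p 1 h1
    rwa [mul_one] at h2
  have B : Module.Basis (Fin 8) ℂ (MvPolynomial (Fin 4) ℂ ⧸ tjurinaT333 a) := Module.Basis.mk li htop
  rw [Module.finrank_eq_card_basis B, Fintype.card_fin]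
end

section
/- The polynomial χ(t) = t^22 - (1/2)t^19 + (1/2)t^16 + (1/2)t^15 - (1/2)t^14 - (1/2)t^12 + (1/2)t^11 - (1/2)t^10 - (1/2)t^8 + (1/2)t^7 + (1/2)t^6 - (1/2)t^3 + 1 is irreducible over Q. -/
open Polynomial

namespace ChiE6Aux

abbrev R := ZMod 89

noncomputable def toPoly : List R → R[X]
  | [] => 0
  | c :: l => C c + X * toPoly l

def addL : List R → List R → List R
  | [], b => b
  | a, [] => a
  | x :: a, y :: b => (x + y) :: addL a b

def mulL : List R → List R → List R
  | [], _ => []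
  | x :: a, b => addL (b.map fun y => x * y) (0 :: mulL a b)

lemma toPoly_addL : ∀ a b : List R, toPoly (addL a b) = toPoly a + toPoly b
  | [], b => by simp [addL, toPoly]
  | x :: a, [] => by simp [addL, toPoly]
  | x :: a, y :: b => by
      simp only [addL, toPoly, toPoly_addL a b, map_add]
      ring

lemma toPoly_map_mul (c : R) : ∀ b : List R,
    toPoly (b.map fun y => c * y) = C c * toPoly b
  | [] => by simp [toPoly]
  | y :: b => by
      simp only [List.map, toPoly, toPoly_map_mul c b, map_mul]
      ring

lemma toPoly_mulL : ∀ a b : List R, toPoly (mulL a b) = toPoly a * toPoly b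
  | [], b => by simp [mulL, toPoly]
  | x :: a, b => by
      simp only [mulL, toPoly, toPoly_addL, toPoly_map_mul, toPoly_mulL a b]
      simp [toPoly]
      ring

def fL : List R := [2, 0, 0, -1, 0, 0, 1, 1, -1, 0, -1, 1, -1, 0, -1, 1, 1, 0, 0, -1, 0, 0, 2]

noncomputable def fP : R[X] := toPoly fL

/-- Congruence modulo `fP`. -/
def Cg (a b : R[X]) : Prop := fP ∣ a - b

lemma Cg.refl (a : R[X]) : Cg a a := by simp [Cg]

lemma Cg.trans {a b c : R[X]} (h1 : Cg a b) (h2 : Cg b c) : Cg a c := by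
  have := dvd_add h1 h2
  simpa [Cg] using this

lemma Cg.mul {a a' b b' : R[X]} (h1 : Cg a a') (h2 : Cg b b') : Cg (a * b) (a' * b') := by
  show fP ∣ a * b - a' * b'
  have h : a * b - a' * b' = a * (b - b') + b' * (a - a') := by ring
  rw [h]
  exact dvd_add (Dvd.dvd.mul_left h2 a) (Dvd.dvd.mul_left h1 b')

lemma Cg.pow {a b : R[X]} (h : Cg a b) (n : ℕ) : Cg (a ^ n) (b ^ n) :=
  dvd_trans h (sub_dvd_pow_sub_pow a b n)

lemma cert {a b q r : List R} (h : mulL a b = addL (mulL q fL) r) :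
    Cg (toPoly a * toPoly b) (toPoly r) :=
  ⟨toPoly q, by
    have := congrArg toPoly h
    rw [toPoly_mulL, toPoly_addL, toPoly_mulL] at this
    rw [this, fP]; ring⟩

lemma toPoly_e11 : toPoly [0,0,0,0,0,0,0,0,0,0,0,(1:R)] = X ^ 11 := by
  simp [toPoly]; ring

lemma toPoly_x : toPoly [(0:R), 1] = X := by
  simp [toPoly]

lemma baseStep (t22 t44 t88 r1 q1 q2 q3 q4 : List R)
    (h1 : mulL [0,0,0,0,0,0,0,0,0,0,0,(1:R)] [0,0,0,0,0,0,0,0,0,0,0,(1:R)] = addL (mulL q1 fL) t22)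
    (h2 : mulL t22 t22 = addL (mulL q2 fL) t44)
    (h3 : mulL t44 t44 = addL (mulL q3 fL) t88)
    (h4 : mulL t88 [(0:R),1] = addL (mulL q4 fL) r1) :
    Cg (X ^ (89 : ℕ)) (toPoly r1) := by
  have c22 : Cg (X ^ (22 : ℕ)) (toPoly t22) := by
    have h := cert h1; rw [toPoly_e11, ← pow_add] at h; exact h
  have c44 : Cg (X ^ (44 : ℕ)) (toPoly t44) := by
    have h' := (c22.mul c22).trans (cert h2)
    rwa [← pow_add] at h'
  have c88 : Cg (X ^ (88 : ℕ)) (toPoly t88) := by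
    have h' := (c44.mul c44).trans (cert h3)
    rwa [← pow_add] at h'
  have c89 : Cg (X ^ (89 : ℕ)) (toPoly r1) := by
    have h' := (c88.mul (Cg.refl (toPoly [(0:R),1]))).trans (cert h4)
    rwa [toPoly_x, ← pow_succ] at h'
  exact c89

lemma frobStep {N : ℕ} (s t2 t4 t8 t16 t32 t64 m1 m2 r' q1 q2 q3 q4 q5 q6 q7 q8 q9 : List R)
    (hs : Cg (X ^ N) (toPoly s))
    (h1 : mulL s s = addL (mulL q1 fL) t2)
    (h2 : mulL t2 t2 = addL (mulL q2 fL) t4)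
    (h3 : mulL t4 t4 = addL (mulL q3 fL) t8)
    (h4 : mulL t8 t8 = addL (mulL q4 fL) t16)
    (h5 : mulL t16 t16 = addL (mulL q5 fL) t32)
    (h6 : mulL t32 t32 = addL (mulL q6 fL) t64)
    (h7 : mulL t64 t16 = addL (mulL q7 fL) m1)
    (h8 : mulL m1 t8 = addL (mulL q8 fL) m2)
    (h9 : mulL m2 s = addL (mulL q9 fL) r') :
    Cg (X ^ (N * 89)) (toPoly r') := by
  set S := toPoly s with hS
  have c2 : Cg (S ^ (2:ℕ)) (toPoly t2) := by
    have h := cert h1; rwa [← sq] at h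
  have c4 : Cg (S ^ (4:ℕ)) (toPoly t4) := by
    have h := (c2.pow 2).trans (by rw [sq]; exact cert h2)
    rwa [← pow_mul] at h
  have c8 : Cg (S ^ (8:ℕ)) (toPoly t8) := by
    have h := (c4.pow 2).trans (by rw [sq]; exact cert h3)
    rwa [← pow_mul] at h
  have c16 : Cg (S ^ (16:ℕ)) (toPoly t16) := by
    have h := (c8.pow 2).trans (by rw [sq]; exact cert h4)
    rwa [← pow_mul] at h
  have c32 : Cg (S ^ (32:ℕ)) (toPoly t32) := by
    have h := (c16.pow 2).trans (by rw [sq]; exact cert h5)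
    rwa [← pow_mul] at h
  have c64 : Cg (S ^ (64:ℕ)) (toPoly t64) := by
    have h := (c32.pow 2).trans (by rw [sq]; exact cert h6)
    rwa [← pow_mul] at h
  have c80 : Cg (S ^ (80:ℕ)) (toPoly m1) := by
    have h := (c64.mul c16).trans (cert h7)
    rwa [← pow_add] at h
  have c88 : Cg (S ^ (88:ℕ)) (toPoly m2) := by
    have h := (c80.mul c8).trans (cert h8)
    rwa [← pow_add] at h
  have c89 : Cg (S ^ (89:ℕ)) (toPoly r') := by
    have h := (c88.mul (Cg.refl S)).trans (cert h9)
    rwa [← pow_succ] at h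
  have h := (hs.pow 89).trans c89
  rwa [← pow_mul] at h

lemma coprimeCert (u v w r : List R)
    (h1 : addL (mulL u fL) (mulL v w) =
      [1,0,0,0,0,0,0,0,0,0,0,0,0,0,0,0,0,0,0,0,0,0,
       0,0,0,0,0,0,0,0,0,0,0,0,0,0,0,0,0,0,0,0,0,0])
    (h2 : addL w [0,1] = r) :
    IsCoprime fP (toPoly r - X) := by
  have hw : toPoly w = toPoly r - X := by
    have h := congrArg toPoly h2
    rw [toPoly_addL, toPoly_x] at h
    exact eq_sub_of_add_eq h
  refine ⟨toPoly u, toPoly v, ?_⟩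
  have h := congrArg toPoly h1
  rw [toPoly_addL, toPoly_mulL, toPoly_mulL] at h
  rw [← hw, show fP = toPoly fL from rfl, h]
  norm_num [toPoly]

-- generated lists
def r1L : List R := [80, 83, 22, 34, 2, 18, 74, 70, 85, 1, 52, 27, 57, 67, 35, 58, 5, 71, 62, 69, 78, 61]
def r2L : List R := [70, 57, 29, 88, 27, 10, 75, 52, 9, 10, 46, 79, 32, 63, 38, 40, 48, 7, 28, 71, 49, 23]
def r3L : List R := [40, 35, 2, 31, 69, 76, 51, 56, 12, 66, 8, 1, 18, 26, 69, 66, 74, 59, 84, 55, 25, 8]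
def r4L : List R := [22, 19, 86, 26, 44, 0, 3, 87, 29, 78, 39, 22, 55, 46, 20, 8, 50, 16, 31, 35, 14, 62]
def r5L : List R := [72, 57, 85, 23, 25, 40, 3, 16, 58, 71, 37, 66, 27, 61, 39, 18, 36, 2, 8, 30, 49, 42]
def r6L : List R := [50, 86, 80, 35, 27, 2, 84, 68, 13, 7, 45, 87, 53, 72, 41, 5, 41, 53, 61, 4, 42, 2]
def r7L : List R := [10, 61, 45, 58, 69, 22, 50, 57, 50, 51, 24, 24, 81, 4, 71, 1, 20, 72, 81, 16, 49, 34]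
def r8L : List R := [78, 58, 51, 51, 83, 2, 57, 12, 16, 11, 7, 65, 40, 23, 24, 56, 6, 58, 82, 38, 83, 30]
def r9L : List R := [21, 38, 55, 51, 2, 44, 64, 74, 1, 76, 49, 46, 2, 19, 35, 13, 70, 83, 75, 85, 36, 21]
def r10L : List R := [49, 39, 46, 5, 43, 69, 38, 8, 55, 69, 66, 78, 31, 21, 23, 37, 39, 86, 71, 7, 66, 51]
def r11L : List R := [0, 0, 45, 0, 0, 44, 44, 45, 0, 45, 44, 45, 0, 45, 44, 44, 0, 0, 45, 0, 0, 88]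

lemma c1 : Cg (X ^ (89^1 : ℕ)) (toPoly r1L) := by
  have h := baseStep [88, 0, 0, 45, 0, 0, 44, 44, 45, 0, 45, 44, 45, 0, 45, 44, 44, 0, 0, 45, 0, 0] [28, 48, 36, 62, 75, 71, 76, 25, 39, 37, 9, 85, 54, 61, 41, 39, 23, 50, 61, 5, 6, 22] [83, 22, 74, 2, 18, 34, 30, 36, 1, 3, 76, 8, 67, 75, 18, 54, 71, 62, 20, 78, 61, 9] r1L [45] [31, 65, 71, 73, 84, 0, 17, 71, 61, 17, 25, 67, 22, 61, 0, 0, 78, 0, 0, 0, 0] [39, 87, 76, 56, 18, 9, 50, 1, 36, 51, 58, 46, 75, 58, 83, 18, 76, 69, 39, 43, 64] [49] (by decide) (by decide) (by decide) (by decide)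
  simpa using h
lemma c2 : Cg (X ^ (89^2 : ℕ)) (toPoly r2L) := by
  have h := frobStep (N := 89^1) r1L [27, 47, 73, 39, 35, 10, 17, 7, 50, 48, 58, 55, 75, 73, 38, 23, 38, 60, 81, 28, 17, 22] [50, 5, 75, 77, 68, 55, 88, 88, 14, 51, 66, 58, 35, 82, 58, 12, 73, 28, 55, 43, 25, 67] [71, 31, 61, 15, 18, 63, 56, 17, 25, 45, 8, 56, 15, 17, 0, 2, 58, 8, 79, 43, 1, 67] [28, 47, 7, 38, 88, 4, 23, 26, 31, 83, 85, 81, 82, 59, 50, 42, 69, 21, 44, 67, 42, 29] [7, 80, 59, 43, 5, 4, 71, 14, 21, 8, 7, 46, 45, 63, 50, 70, 53, 82, 33, 87, 62, 20] [10, 1, 56, 87, 18, 19, 78, 10, 32, 86, 33, 57, 70, 88, 56, 46, 75, 39, 60, 86, 50, 70] [37, 77, 23, 18, 30, 59, 33, 77, 5, 68, 6, 83, 2, 68, 5, 46, 24, 0, 15, 57, 60, 62] [51, 54, 42, 59, 22, 87, 8, 87, 41, 71, 55, 72, 23, 75, 8, 15, 16, 56, 59, 70, 47, 85] r2L [27,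 75, 6, 1, 40, 38, 49, 23, 45, 3, 15, 27, 7, 19, 14, 85, 87, 15, 42, 41, 36] [28, 65, 12, 54, 12, 68, 75, 17, 9, 64, 31, 4, 68, 26, 61, 32, 72, 65, 4, 18, 64] [13, 12, 83, 41, 53, 64, 43, 11, 70, 10, 12, 13, 79, 0, 11, 52, 29, 75, 34, 73, 64] [59, 86, 2, 74, 87, 71, 60, 72, 22, 77, 4, 84, 74, 22, 34, 32, 60, 28, 78, 67, 64] [77, 30, 25, 75, 15, 30, 42, 55, 16, 9, 25, 10, 33, 6, 76, 79, 15, 6, 66, 61, 20] [64, 70, 25, 70, 35, 31, 87, 78, 62, 16, 15, 82, 32, 29, 78, 77, 36, 13, 13, 83, 22] [77, 77, 30, 87, 38, 60, 39, 3, 37, 17, 17, 13, 3, 54, 66, 78, 74, 35, 14, 59, 36] [42, 76, 47, 53, 46, 2, 42, 3, 18, 87, 29, 56, 80, 75, 73, 88, 21, 13, 24, 83, 30] [47, 65, 62, 70, 17, 65, 44, 78, 65, 84, 72, 53, 64, 0, 49, 38, 34, 3, 3, 76, 56] c1 (by decide) (by decide) (by decide) (by decide) (by decide) (by decide) (by decide)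 (by decide) (by decide)
  rwa [show (89:ℕ)^1 * 89 = 89^2 by norm_num] at h
lemma c3 : Cg (X ^ (89^3 : ℕ)) (toPoly r3L) := by
  have h := frobStep (N := 89^2) r2L [45, 34, 59, 62, 78, 67, 18, 56, 52, 16, 61, 34, 84, 40, 21, 58, 0, 85, 36, 39, 84, 63] [24, 30, 60, 56, 38, 59, 47, 38, 65, 37, 65, 76, 40, 38, 32, 9, 26, 76, 75, 16, 82, 11] [58, 23, 7, 55, 54, 16, 5, 83, 57, 33, 34, 35, 59, 69, 76, 78, 67, 62, 56, 60, 46, 61] [41, 14, 75, 25, 8, 41, 41, 18, 77, 38, 80, 69, 51, 48, 58, 86, 70, 61, 75, 88, 77, 37] [68, 82, 21, 83, 55, 86, 58, 44, 22, 8, 69, 54, 2, 1, 83, 69, 56, 2, 41, 40, 39, 26] [53, 31, 65, 8, 71, 16, 49, 53, 11, 65, 65, 1, 31, 51, 12, 66, 32, 47, 31, 16, 17, 54] [81, 32, 67, 78, 37, 76, 49, 18, 67, 58, 32, 84, 14, 84, 77, 83, 42, 20, 33, 77, 66, 23] [15, 53, 40, 20, 24, 79, 39, 27, 3, 76, 10,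 75, 21, 10, 5, 81, 54, 16, 67, 5, 8, 19] r3L [69, 57, 65, 29, 18, 73, 33, 86, 11, 58, 78, 81, 54, 63, 71, 68, 78, 50, 30, 59, 42] [66, 2, 88, 84, 87, 39, 30, 30, 17, 75, 57, 47, 22, 73, 25, 11, 82, 17, 22, 41, 71] [81, 41, 62, 42, 69, 65, 49, 1, 16, 45, 31, 25, 9, 72, 26, 53, 0, 9, 67, 12, 16] [15, 81, 10, 53, 8, 3, 55, 37, 37, 23, 88, 9, 85, 74, 9, 20, 38, 53, 1, 47, 36] [50, 88, 3, 56, 36, 22, 71, 64, 0, 45, 14, 38, 73, 59, 8, 65, 23, 81, 35, 1, 17] [16, 87, 85, 72, 50, 76, 24, 4, 64, 78, 22, 82, 53, 53, 75, 47, 21, 36, 65, 35, 71] [67, 56, 77, 80, 19, 78, 58, 82, 76, 62, 27, 82, 70, 50, 51, 49, 85, 12, 78, 35, 20] [72, 53, 38, 58, 35, 51, 2, 28, 63, 29, 25, 31, 77, 65, 59, 36, 35, 34, 62, 50, 34] [60, 40, 12, 79, 60, 72, 55, 71, 87, 13, 24, 74, 56, 60, 44, 4, 35, 17, 38, 68,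 85] c2 (by decide) (by decide) (by decide) (by decide) (by decide) (by decide) (by decide) (by decide) (by decide)
  rwa [show (89:ℕ)^2 * 89 = 89^3 by norm_num] at h
lemma c4 : Cg (X ^ (89^4 : ℕ)) (toPoly r4L) := by
  have h := frobStep (N := 89^3) r3L [5, 84, 69, 22, 27, 88, 52, 45, 23, 49, 42, 15, 60, 16, 43, 64, 38, 31, 20, 33, 84, 83] [10, 59, 1, 35, 0, 71, 76, 69, 12, 19, 1, 44, 1, 77, 71, 20, 77, 56, 45, 29, 48, 68] [78, 56, 61, 50, 47, 44, 40, 41, 12, 48, 58, 41, 76, 67, 82, 19, 75, 77, 65, 40, 79, 12] [17, 75, 16, 8, 49, 37, 7, 41, 12, 54, 45, 41, 6, 15, 62, 41, 74, 59, 0, 19, 70, 42] [4, 15, 75, 10, 11, 60, 55, 6, 26, 51, 13, 1, 19, 38, 34, 61, 14, 7, 56, 1, 5, 49] [60, 76, 37, 55, 4, 18, 57, 72, 34, 60, 64, 6, 44, 36, 24, 56, 75, 42, 11, 57, 13, 31] [5, 72, 84, 70, 37, 81, 23, 20, 12, 67, 18, 33, 43, 1, 42, 33, 11, 67, 16, 23,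 35, 10] [56, 21, 82, 64, 6, 42, 20, 57, 81, 88, 68, 14, 49, 68, 19, 22, 36, 50, 7, 42, 72, 49] r4L [41, 23, 35, 29, 18, 17, 80, 85, 58, 24, 64, 74, 48, 10, 65, 10, 46, 16, 85, 22, 32] [52, 79, 1, 85, 42, 8, 79, 55, 22, 62, 65, 40, 72, 7, 57, 73, 51, 80, 37, 30, 18] [11, 28, 29, 78, 9, 70, 57, 3, 83, 32, 20, 44, 37, 82, 40, 22, 55, 1, 9, 60, 87] [52, 14, 88, 40, 32, 17, 35, 66, 54, 16, 26, 27, 33, 74, 81, 58, 35, 60, 85, 58, 72] [9, 66, 21, 45, 31, 7, 7, 45, 33, 49, 81, 50, 56, 69, 57, 51, 79, 80, 44, 3, 81] [67, 22, 38, 14, 34, 8, 71, 11, 75, 64, 72, 83, 70, 47, 68, 29, 34, 34, 17, 67, 88] [18, 12, 87, 7, 60, 39, 1, 79, 67, 5, 64, 77, 58, 58, 0, 24, 20, 5, 33, 23, 28] [78, 45, 19, 23, 70, 30, 52, 10, 31, 7, 12, 54, 9, 25, 67, 66, 26, 57, 74, 71, 60] [41, 11, 18, 7, 3, 24, 5,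 40, 46, 44, 51, 0, 62, 75, 50, 16, 21, 61, 57, 55, 18] c3 (by decide) (by decide) (by decide) (by decide) (by decide) (by decide) (by decide) (by decide) (by decide)
  rwa [show (89:ℕ)^3 * 89 = 89^4 by norm_num] at h
lemma c5 : Cg (X ^ (89^5 : ℕ)) (toPoly r5L) := by
  have h := frobStep (N := 89^4) r4L [37, 16, 61, 28, 63, 56, 40, 33, 28, 45, 19, 23, 10, 67, 61, 74, 50, 41, 56, 30, 22, 35] [74, 81, 5, 39, 79, 8, 73, 11, 69, 45, 72, 11, 32, 20, 24, 39, 82, 56, 43, 25, 6, 72] [61, 46, 76, 50, 48, 15, 51, 17, 20, 71, 84, 8, 0, 42, 56, 68, 76, 57, 31, 29, 42, 61] [79, 22, 45, 28, 88, 19, 53, 3, 49, 5, 4, 54, 70, 47, 24, 42, 30, 51, 12, 7, 66, 38] [68, 41, 73, 58, 19, 81, 46, 52, 40, 18, 25, 68, 32, 64, 49, 20, 32, 50, 34, 15, 45, 62] [62, 25, 28, 64, 82, 8, 68, 34, 13, 6, 19, 10, 52, 23, 85, 57, 16, 38, 80, 11, 33, 16] [56, 86, 6, 21, 35, 60, 42,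 61, 8, 49, 85, 41, 22, 36, 24, 87, 25, 69, 61, 70, 14, 24] [70, 29, 31, 67, 36, 16, 80, 86, 41, 51, 79, 49, 35, 83, 1, 52, 64, 58, 42, 0, 29, 49] r5L [1, 54, 84, 12, 38, 60, 35, 64, 38, 11, 59, 46, 1, 35, 25, 25, 25, 80, 43, 67, 53] [69, 62, 24, 69, 3, 79, 33, 74, 77, 75, 11, 37, 31, 8, 2, 83, 31, 56, 46, 58, 34] [82, 8, 8, 14, 53, 18, 26, 31, 81, 8, 45, 39, 10, 86, 58, 36, 57, 3, 38, 76, 11] [41, 36, 20, 11, 80, 26, 69, 70, 18, 13, 33, 68, 67, 58, 72, 43, 28, 12, 70, 70, 36] [16, 71, 67, 66, 18, 62, 59, 78, 85, 81, 65, 42, 19, 67, 56, 27, 48, 33, 41, 16, 10] [56, 61, 50, 80, 5, 40, 62, 82, 36, 47, 66, 57, 84, 0, 24, 86, 41, 6, 29, 31, 53] [18, 69, 14, 82, 14, 88, 50, 25, 18, 69, 34, 0, 29, 22, 57, 58, 45, 66, 19, 87, 37] [71, 25, 46, 64, 16, 30, 59, 83, 59, 88, 35, 41, 59, 64, 69,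 72, 71, 44, 18, 41, 20] [22, 21, 24, 73, 53, 71, 79, 79, 16, 15, 8, 60, 21, 37, 56, 17, 39, 80, 37, 85, 6] c4 (by decide) (by decide) (by decide) (by decide) (by decide) (by decide) (by decide) (by decide) (by decide)
  rwa [show (89:ℕ)^4 * 89 = 89^5 by norm_num] at h
lemma c6 : Cg (X ^ (89^6 : ℕ)) (toPoly r6L) := by
  have h := frobStep (N := 89^5) r5L [45, 64, 58, 86, 85, 65, 53, 76, 16, 27, 84, 51, 4, 62, 4, 64, 39, 43, 66, 39, 59, 66] [85, 61, 83, 24, 26, 16, 36, 69, 5, 11, 41, 28, 4, 67, 28, 65, 46, 6, 80, 79, 61, 10] [51, 64, 20, 44, 43, 27, 24, 50, 29, 50, 3, 47, 8, 63, 6, 72, 9, 19, 88, 45, 25, 21] [86, 28, 11, 63, 47, 33, 86, 44, 18, 37, 18, 78, 35, 32, 64, 75, 77, 82, 47, 68, 57, 33] [74, 46, 0, 39, 55, 33, 40, 17, 70, 81, 83, 48, 56, 0, 51, 46, 5, 39, 41, 38, 69, 5] [23, 58, 10, 38, 49, 6, 21, 82, 60, 16, 26, 68, 14, 61, 54, 20,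 31, 46, 28, 16, 1, 4] [42, 13, 8, 72, 86, 75, 40, 0, 25, 86, 67, 41, 18, 36, 74, 82, 14, 0, 67, 30, 3, 10] [18, 31, 25, 45, 56, 57, 33, 25, 34, 34, 60, 81, 17, 60, 18, 87, 23, 52, 4, 60, 87, 24] r6L [33, 67, 17, 22, 84, 6, 3, 1, 48, 80, 43, 2, 52, 53, 46, 32, 86, 22, 13, 11, 81] [80, 46, 33, 45, 74, 56, 52, 76, 42, 47, 24, 40, 2, 48, 81, 30, 50, 3, 87, 67, 42] [27, 80, 50, 19, 17, 10, 58, 64, 6, 24, 44, 9, 13, 41, 48, 83, 44, 37, 25, 76, 50] [56, 46, 81, 5, 2, 49, 39, 38, 87, 39, 84, 30, 66, 27, 30, 24, 47, 35, 56, 80, 87] [12, 71, 3, 61, 45, 26, 57, 10, 48, 50, 46, 22, 52, 71, 24, 41, 49, 70, 86, 12, 55] [12, 82, 74, 25, 51, 22, 28, 63, 82, 82, 38, 2, 29, 12, 47, 19, 47, 52, 34, 78, 57] [78, 6, 74, 17, 82, 6, 45, 64, 15, 54, 63, 57, 36, 7, 25, 22, 62, 11, 28, 86, 66] [83, 58,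 4, 50, 71, 17, 52, 17, 88, 60, 46, 88, 26, 11, 47, 66, 60, 81, 88, 23, 16] [0, 73, 61, 57, 26, 39, 70, 6, 29, 73, 86, 73, 56, 10, 61, 24, 65, 3, 58, 12, 59] c5 (by decide) (by decide) (by decide) (by decide) (by decide) (by decide) (by decide) (by decide) (by decide)
  rwa [show (89:ℕ)^5 * 89 = 89^6 by norm_num] at h
lemma c7 : Cg (X ^ (89^7 : ℕ)) (toPoly r7L) := by
  have h := frobStep (N := 89^6) r6L [22, 60, 11, 57, 33, 2, 41, 56, 82, 34, 18, 76, 67, 48, 13, 15, 40, 84, 81, 30, 66, 83] [24, 32, 57, 15, 57, 15, 19, 85, 29, 58, 83, 80, 41, 52, 63, 76, 27, 16, 30, 71, 35, 20] [12, 54, 57, 11, 84, 2, 66, 9, 68, 50, 5, 18, 33, 21, 41, 60, 25, 36, 23, 88, 76, 24] [79, 85, 62, 43, 70, 0, 25, 15, 70, 60, 76, 11, 6, 19, 24, 35, 70, 67, 16, 33, 27, 0] [19, 10, 8, 47, 84, 15, 20, 4, 14, 56, 48, 45, 79, 35, 75, 20, 21, 80, 30, 70, 25, 59] [59, 76, 46,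 7, 38, 62, 75, 56, 69, 8, 15, 65, 47, 23, 8, 40, 88, 48, 67, 81, 12, 56] [1, 77, 12, 51, 60, 40, 87, 14, 34, 20, 46, 53, 38, 55, 82, 25, 37, 80, 23, 32, 65, 38] [8, 44, 10, 36, 87, 6, 32, 47, 42, 30, 74, 22, 20, 26, 47, 45, 14, 70, 50, 69, 80, 40] r7L [82, 87, 83, 54, 22, 56, 79, 13, 23, 65, 40, 78, 40, 21, 33, 60, 48, 24, 0, 84, 2] [52, 58, 11, 19, 24, 68, 2, 36, 10, 40, 84, 5, 15, 82, 15, 11, 21, 79, 40, 49, 18] [15, 29, 27, 50, 63, 70, 10, 2, 10, 73, 58, 14, 34, 44, 70, 41, 13, 70, 30, 77, 22] [77, 27, 64, 23, 1, 57, 13, 23, 12, 63, 31, 35, 16, 0, 41, 28, 9, 86, 16, 44, 21] [85, 35, 7, 53, 2, 68, 49, 29, 40, 41, 48, 32, 26, 76, 2, 5, 42, 1, 53, 0, 0] [62, 63, 1, 66, 19, 2, 46, 80, 81, 71, 26, 82, 37, 35, 13, 62, 69, 7, 37, 51, 5] [16, 42, 17, 9, 17, 42, 15, 3, 25, 18,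 14, 41, 17, 20, 1, 11, 52, 4, 18, 44, 0] [2, 22, 83, 54, 20, 67, 78, 33, 4, 81, 29, 38, 57, 77, 20, 50, 45, 33, 76, 88, 11] [17, 34, 81, 50, 44, 41, 23, 0, 16, 14, 0, 57, 67, 10, 60, 67, 56, 51, 49, 30, 40] c6 (by decide) (by decide) (by decide) (by decide) (by decide) (by decide) (by decide) (by decide) (by decide)
  rwa [show (89:ℕ)^6 * 89 = 89^7 by norm_num] at h
lemma c8 : Cg (X ^ (89^8 : ℕ)) (toPoly r8L) := by
  have h := frobStep (N := 89^7) r7L [86, 51, 42, 44, 78, 65, 45, 88, 36, 4, 74, 27, 87, 0, 38, 40, 8, 58, 54, 38, 34, 34] [28, 5, 15, 84, 67, 24, 40, 86, 72, 73, 21, 12, 58, 26, 60, 59, 9, 52, 48, 81, 40, 31] [87, 38, 46, 47, 8, 42, 58, 52, 65, 41, 38, 67, 77, 46, 55, 48, 38, 85, 29, 48, 15, 68] [55, 54, 12, 82, 86, 16, 24, 45, 0, 20, 7, 12, 55, 31, 74, 38, 48, 84, 55, 19, 53, 4] [40, 86, 39, 19, 30, 18, 47, 68, 40, 57, 43, 33,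 86, 17, 9, 10, 2, 12, 72, 48, 86, 8] [3, 8, 19, 35, 53, 56, 84, 71, 5, 73, 8, 45, 37, 32, 17, 5, 31, 14, 86, 64, 83, 78] [10, 62, 54, 29, 83, 51, 59, 29, 12, 67, 52, 69, 78, 42, 79, 18, 84, 66, 25, 17, 49, 83] [8, 73, 51, 31, 20, 55, 32, 47, 32, 85, 10, 16, 13, 84, 37, 43, 45, 19, 86, 48, 73, 29] r8L [7, 6, 20, 58, 87, 30, 46, 61, 81, 26, 29, 3, 14, 57, 40, 35, 80, 0, 9, 64, 44] [35, 67, 10, 72, 44, 17, 80, 22, 64, 17, 51, 18, 43, 32, 83, 69, 35, 35, 1, 88, 44] [37, 32, 9, 19, 62, 70, 39, 67, 9, 30, 29, 67, 26, 66, 18, 26, 1, 51, 18, 83, 80] [19, 75, 1, 65, 19, 16, 71, 76, 47, 40, 32, 41, 60, 30, 69, 64, 45, 21, 39, 41, 87] [24, 79, 7, 43, 43, 50, 67, 4, 48, 64, 2, 24, 14, 0, 8, 88, 22, 74, 12, 34, 8] [42, 54, 42, 68, 35, 29, 77, 47, 1, 78, 20, 15, 62, 84, 68, 48, 41, 3,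 77, 65, 32] [33, 3, 62, 2, 41, 17, 39, 83, 65, 21, 23, 45, 26, 40, 83, 1, 67, 29, 87, 8, 67] [75, 47, 38, 10, 61, 40, 9, 38, 17, 44, 63, 68, 25, 34, 64, 3, 56, 51, 45, 19, 63] [1, 46, 55, 0, 73, 43, 46, 44, 48, 29, 69, 46, 46, 81, 48, 33, 25, 15, 33, 38, 48] c7 (by decide) (by decide) (by decide) (by decide) (by decide) (by decide) (by decide) (by decide) (by decide)
  rwa [show (89:ℕ)^7 * 89 = 89^8 by norm_num] at h
lemma c9 : Cg (X ^ (89^9 : ℕ)) (toPoly r9L) := by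
  have h := frobStep (N := 89^8) r8L [35, 74, 66, 33, 54, 7, 86, 53, 0, 38, 24, 72, 10, 26, 16, 48, 13, 63, 22, 74, 8, 50] [51, 23, 31, 84, 87, 58, 74, 61, 55, 32, 77, 12, 1, 70, 35, 31, 75, 85, 56, 28, 69, 74] [21, 55, 37, 16, 64, 43, 35, 25, 12, 20, 14, 36, 55, 36, 40, 7, 48, 23, 2, 57, 88, 32] [59, 62, 33, 70, 87, 84, 17, 8, 61, 76, 60, 30, 6, 2, 7, 1, 23, 22, 31, 62, 19, 44] [0, 7, 55, 59, 82, 48, 35, 46, 7, 51, 36, 0, 0, 10, 66, 12, 86, 64, 75, 79, 68, 0] [63, 21, 39, 54, 79, 85, 58, 47, 71, 57, 21, 17, 69, 42, 84, 42, 39, 68, 28, 57, 67, 67] [21, 86, 66, 19, 64, 56, 44, 66, 56, 45, 73, 61, 28, 78, 14, 51, 7, 13, 18, 88, 13, 71] [78, 84, 59, 48, 57, 33, 82, 24, 8, 77, 11, 58, 82, 31, 65, 59, 51, 46, 42, 19, 20, 88] r9L [43, 37, 20, 88, 44, 57, 18, 33, 53, 41, 17, 23, 73, 32, 70, 56, 11,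 54, 1, 87, 5] [53, 42, 4, 16, 35, 73, 16, 34, 41, 37, 83, 85, 79, 54, 65, 20, 34, 3, 83, 44, 4] [44, 33, 47, 27, 70, 0, 4, 19, 49, 46, 76, 85, 11, 21, 20, 57, 16, 58, 47, 33, 68] [13, 56, 48, 73, 45, 13, 55, 65, 26, 23, 81, 72, 20, 69, 74, 25, 73, 85, 0, 57, 67] [5, 50, 59, 8, 78, 72, 35, 8, 61, 57, 54, 45, 39, 55, 17, 67, 70, 0, 16, 35, 78] [13, 34, 5, 53, 34, 41, 36, 39, 47, 58, 21, 81, 27, 33, 71, 41, 77, 32, 87, 0, 0] [68, 82, 49, 38, 78, 44, 70, 86, 46, 8, 48, 29, 59, 87, 49, 5, 63, 26, 7, 19, 50] [48, 59, 35, 80, 83, 24, 32, 57, 52, 87, 68, 52, 27, 46, 51, 45, 85, 52, 43, 39, 68] [50, 1, 68, 15, 85, 33, 13, 0, 3, 58, 50, 47, 74, 58, 32, 36, 43, 59, 28, 36, 74] c8 (by decide) (by decide) (by decide) (by decide) (by decide) (by decide) (by decide) (by decide) (by decide)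
  rwa [show (89:ℕ)^8 * 89 = 89^9 by norm_num] at h
lemma c10 : Cg (X ^ (89^10 : ℕ)) (toPoly r10L) := by
  have h := frobStep (N := 89^9) r9L [26, 32, 72, 75, 58, 27, 2, 54, 22, 71, 18, 6, 83, 65, 43, 52, 74, 48, 50, 33, 2, 64] [48, 47, 71, 47, 80, 2, 21, 35, 62, 14, 25, 17, 42, 70, 21, 62, 72, 2, 11, 11, 33, 28] [36, 62, 47, 54, 69, 7, 1, 43, 10, 36, 3, 47, 54, 61, 63, 80, 33, 9, 62, 0, 38, 87] [42, 0, 18, 43, 22, 26, 71, 41, 84, 56, 74, 54, 44, 62, 88, 52, 56, 50, 3, 76, 30, 38] [50, 86, 5, 34, 52, 57, 43, 56, 10, 2, 55, 42, 67, 39, 35, 83, 37, 16, 75, 65, 82, 68] [24, 16, 75, 59, 55, 1, 26, 65, 37, 6, 66, 6, 8, 33, 23, 56, 8, 77, 18, 20, 53, 25] [80, 6, 72, 70, 86, 65, 75, 59, 83, 7, 56, 3, 66, 57, 41, 84, 22, 63, 1, 21, 31, 43] [86, 31, 80, 42, 71, 30, 63, 9, 15, 10, 36, 0, 68, 41, 12,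 14, 61, 44, 13, 65, 14, 9] r10L [74, 70, 61, 1, 72, 84, 28, 37, 13, 5, 27, 68, 68, 63, 71, 79, 23, 6, 30, 44, 87] [47, 52, 79, 71, 78, 31, 74, 80, 86, 36, 15, 18, 24, 23, 44, 63, 87, 18, 67, 39, 1] [66, 0, 39, 81, 80, 0, 17, 13, 25, 73, 41, 20, 1, 79, 71, 26, 7, 66, 7, 34, 36] [4, 7, 45, 77, 76, 2, 10, 70, 26, 77, 54, 40, 83, 31, 61, 14, 75, 55, 10, 13, 2] [56, 46, 86, 37, 15, 56, 44, 83, 10, 67, 65, 75, 81, 67, 22, 7, 19, 85, 45, 72, 10] [81, 20, 39, 5, 1, 35, 7, 58, 20, 3, 23, 44, 87, 31, 35, 45, 79, 16, 39, 58, 87] [19, 66, 64, 49, 25, 71, 78, 19, 67, 42, 58, 8, 38, 37, 78, 80, 17, 83, 78, 47, 30] [62, 36, 29, 18, 82, 35, 22, 44, 35, 4, 18, 28, 6, 3, 74, 22, 35, 63, 34, 74, 46] [33, 71, 33, 81, 6, 0, 31, 60, 32, 80, 37, 7, 86, 81, 79, 14, 17, 39, 71, 42, 50] c9 (by decide) (by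 decide) (by decide) (by decide) (by decide) (by decide) (by decide) (by decide) (by decide)
  rwa [show (89:ℕ)^9 * 89 = 89^10 by norm_num] at h
lemma c11 : Cg (X ^ (89^11 : ℕ)) (toPoly r11L) := by
  have h := frobStep (N := 89^10) r10L [82, 36, 20, 26, 46, 61, 12, 82, 7, 34, 61, 32, 78, 11, 10, 85, 76, 18, 21, 82, 25, 87] [76, 60, 56, 73, 77, 9, 41, 60, 75, 59, 85, 80, 10, 9, 24, 64, 48, 26, 65, 69, 23, 64] [31, 61, 77, 68, 79, 78, 16, 21, 65, 71, 66, 61, 44, 22, 20, 65, 59, 1, 70, 13, 41, 88] [27, 42, 66, 37, 76, 86, 63, 62, 84, 52, 35, 87, 51, 55, 63, 14, 67, 13, 50, 62, 59, 1] [42, 77, 47, 78, 20, 4, 39, 74, 63, 82, 40, 41, 56, 2, 84, 66, 75, 8, 2, 45, 66, 50] [19, 83, 61, 35, 77, 48, 83, 22, 14, 26, 82, 9, 88, 85, 27, 29, 14, 25, 40, 22, 56, 77] [14, 59, 55, 51, 47, 9, 52, 8, 54, 11, 3, 50, 86, 19, 82, 82, 47, 42, 54, 23, 17, 2] [69, 56,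 60, 66, 70, 26, 80, 4, 57, 5, 53, 34, 4, 72, 1, 36, 54, 60, 25, 66, 50, 50] r11L [47, 24, 23, 47, 56, 18, 85, 8, 67, 20, 51, 32, 26, 12, 55, 40, 55, 83, 43, 73, 10] [31, 74, 35, 72, 56, 71, 77, 39, 50, 3, 43, 19, 87, 61, 69, 25, 88, 51, 15, 39, 2] [69, 35, 10, 53, 30, 13, 70, 59, 29, 40, 56, 0, 60, 65, 76, 60, 1, 7, 8, 48, 1] [22, 1, 76, 78, 1, 8, 73, 58, 71, 15, 49, 37, 37, 7, 31, 82, 85, 85, 71, 48, 45] [32, 72, 15, 10, 25, 85, 36, 49, 87, 47, 17, 12, 72, 66, 56, 7, 64, 37, 67, 59, 45] [27, 33, 13, 38, 52, 61, 18, 12, 23, 19, 11, 4, 37, 33, 0, 85, 35, 46, 67, 7, 4] [27, 66, 51, 26, 47, 41, 28, 74, 66, 66, 54, 42, 34, 16, 74, 27, 52, 55, 45, 30, 83] [49, 23, 46, 45, 84, 16, 45, 71, 41, 34, 17, 12, 9, 28, 38, 11, 1, 46, 83, 77, 88] [44, 3, 77, 42, 44, 62, 30, 27, 23, 59, 69,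 87, 62, 3, 53, 31, 8, 63, 37, 77, 29] c10 (by decide) (by decide) (by decide) (by decide) (by decide) (by decide) (by decide) (by decide) (by decide)
  rwa [show (89:ℕ)^10 * 89 = 89^11 by norm_num] at h

lemma cop1 : IsCoprime fP (toPoly r1L - X) :=
  coprimeCert [29, 53, 44, 22, 1, 62, 81, 48, 48, 21, 34, 33, 78, 8, 24, 81, 22, 67, 6, 13, 55, 0] [36, 53, 17, 76, 7, 1, 16, 71, 26, 43, 48, 10, 30, 31, 61, 9, 45, 53, 4, 57, 65, 23] [80, 82, 22, 34, 2, 18, 74, 70, 85, 1, 52, 27, 57, 67, 35, 58, 5, 71, 62, 69, 78, 61] r1L (by decide) (by decide)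
lemma cop2 : IsCoprime fP (toPoly r2L - X) :=
  coprimeCert [33, 77, 49, 75, 54, 13, 17, 19, 76, 13, 76, 26, 5, 66, 38, 5, 3, 39, 4, 17, 62, 0] [69, 85, 5, 58, 63, 27, 14, 19, 67, 62, 17, 74, 60, 12, 17, 83, 87, 41, 58, 72, 27, 72] [70, 56, 29, 88, 27, 10, 75, 52, 9, 10, 46, 79, 32, 63, 38, 40, 48, 7, 28, 71, 49, 23] r2L (by decide) (by decide)
lemma cop3 : IsCoprime fP (toPoly r3L - X) :=
  coprimeCert [2, 58, 79, 73, 70, 23, 70, 67, 11, 36, 17, 56, 83, 53, 52, 2, 28, 51, 47, 86, 69, 0] [60, 44, 58, 23, 7, 37, 0, 69, 56, 65, 37, 43, 36, 57, 68, 71, 29, 18, 36, 24, 63, 5] [40, 34, 2, 31, 69, 76, 51, 56, 12, 66, 8, 1, 18, 26, 69, 66, 74, 59, 84, 55, 25, 8] r3L (by decide) (by decide)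
lemma cop4 : IsCoprime fP (toPoly r4L - X) :=
  coprimeCert [6, 38, 67, 57, 41, 73, 12, 37, 88, 83, 71, 44, 59, 52, 42, 80, 46, 0, 50, 71, 72, 0] [44, 1, 80, 76, 76, 22, 25, 0, 67, 28, 19, 81, 1, 19, 22, 70, 49, 50, 28, 2, 30, 35] [22, 18, 86, 26, 44, 0, 3, 87, 29, 78, 39, 22, 55, 46, 20, 8, 50, 16, 31, 35, 14, 62] r4L (by decide) (by decide)
lemma cop5 : IsCoprime fP (toPoly r5L - X) :=
  coprimeCert [82, 16, 73, 85, 82, 29, 16, 48, 75, 81, 43, 38, 55, 25, 8, 25, 29, 15, 48, 26, 31, 0] [41, 27, 46, 54, 37, 24, 27, 83, 18, 3, 47, 71, 84, 71, 48, 51, 51, 40, 55, 33, 69, 7] [72, 56, 85, 23, 25, 40, 3, 16, 58, 71, 37, 66, 27, 61, 39, 18, 36, 2, 8, 30, 49, 42] r5L (by decide) (by decide)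
lemma cop6 : IsCoprime fP (toPoly r6L - X) :=
  coprimeCert [43, 56, 30, 70, 35, 70, 9, 24, 78, 48, 40, 0, 77, 43, 5, 28, 45, 49, 36, 59, 69, 0] [25, 14, 24, 74, 81, 67, 73, 67, 22, 4, 11, 74, 12, 22, 83, 72, 11, 73, 63, 15, 55, 20] [50, 85, 80, 35, 27, 2, 84, 68, 13, 7, 45, 87, 53, 72, 41, 5, 41, 53, 61, 4, 42, 2] r6L (by decide) (by decide)
lemma cop7 : IsCoprime fP (toPoly r7L - X) :=
  coprimeCert [81, 40, 48, 55, 26, 66, 52, 22, 10, 5, 51, 3, 5, 62, 55, 68, 81, 64, 8, 52, 73, 0] [64, 53, 43, 55, 88, 80, 79, 12, 48, 64, 35, 33, 30, 46, 40, 73, 59, 54, 61, 14, 31, 69] [10, 60, 45, 58, 69, 22, 50, 57, 50, 51, 24, 24, 81, 4, 71, 1, 20, 72, 81, 16, 49, 34] r7L (by decide) (by decide)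
lemma cop8 : IsCoprime fP (toPoly r8L - X) :=
  coprimeCert [85, 49, 68, 85, 38, 70, 40, 69, 41, 18, 79, 64, 50, 35, 43, 85, 37, 9, 16, 70, 80, 0] [72, 26, 44, 59, 19, 7, 47, 0, 9, 41, 16, 43, 22, 40, 1, 7, 2, 7, 76, 35, 18, 54] [78, 57, 51, 51, 83, 2, 57, 12, 16, 11, 7, 65, 40, 23, 24, 56, 6, 58, 82, 38, 83, 30] r8L (by decide) (by decide)
lemma cop9 : IsCoprime fP (toPoly r9L - X) :=
  coprimeCert [57, 34, 69, 39, 76, 66, 50, 59, 76, 71, 31, 22, 72, 51, 76, 38, 55, 27, 24, 43, 12, 0] [37, 46, 74, 27, 87, 3, 5, 58, 6, 50, 52, 16, 68, 19, 61, 70, 29, 49, 57, 63, 13, 37] [21, 37, 55, 51, 2, 44, 64, 74, 1, 76, 49, 46, 2, 19, 35, 13, 70, 83, 75, 85, 36, 21] r9L (by decide) (by decide)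
lemma cop10 : IsCoprime fP (toPoly r10L - X) :=
  coprimeCert [33, 54, 5, 79, 65, 8, 14, 15, 86, 51, 26, 77, 32, 88, 53, 33, 67, 41, 66, 33, 87, 0] [35, 76, 86, 52, 26, 24, 53, 50, 34, 1, 41, 58, 24, 57, 44, 43, 8, 77, 14, 33, 41, 28] [49, 38, 46, 5, 43, 69, 38, 8, 55, 69, 66, 78, 31, 21, 23, 37, 39, 86, 71, 7, 66, 51] r10L (by decide) (by decide)
lemma cop11 : IsCoprime fP (toPoly r11L - X) :=
  coprimeCert [45, 30, 59, 60, 59, 75, 44, 30, 74, 15, 30, 59, 60, 44, 16, 29, 75, 29, 60, 59, 60, 0] [60, 59, 60, 29, 31, 29, 61, 88, 60, 59, 30, 60, 29, 31, 88, 32, 58, 61, 58, 31, 29, 31] [0, 88, 45, 0, 0, 44, 44, 45, 0, 45, 44, 45, 0, 45, 44, 44, 0, 0, 45, 0, 0, 88] r11L (by decide) (by decide)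

def rList : ℕ → List R
  | 1 => r1L
  | 2 => r2L
  | 3 => r3L
  | 4 => r4L
  | 5 => r5L
  | 6 => r6L
  | 7 => r7L
  | 8 => r8L
  | 9 => r9L
  | 10 => r10L
  | 11 => r11L
  | _ => []

lemma keyCong : ∀ e : ℕ, 1 ≤ e → e ≤ 11 →
    (fP ∣ X ^ (89 ^ e) - toPoly (rList e)) ∧ IsCoprime fP (toPoly (rList e) - X) := by
  intro e h1 h11
  interval_cases e
  · exact ⟨c1, cop1⟩
  · have h := c2
    unfold Cg at h
    rw [show rList 2 = r2L from rfl]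
    exact ⟨h, cop2⟩
  · have h := c3
    unfold Cg at h
    rw [show rList 3 = r3L from rfl]
    exact ⟨h, cop3⟩
  · have h := c4
    unfold Cg at h
    rw [show rList 4 = r4L from rfl]
    exact ⟨h, cop4⟩
  · have h := c5
    unfold Cg at h
    rw [show rList 5 = r5L from rfl]
    exact ⟨h, cop5⟩
  · have h := c6
    unfold Cg at h
    rw [show rList 6 = r6L from rfl]
    exact ⟨h, cop6⟩
  · have h := c7
    unfold Cg at h
    rw [show rList 7 = r7L from rfl]
    exact ⟨h, cop7⟩
  · have h := c8
    unfold Cg at h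
    rw [show rList 8 = r8L from rfl]
    exact ⟨h, cop8⟩
  · have h := c9
    unfold Cg at h
    rw [show rList 9 = r9L from rfl]
    exact ⟨h, cop9⟩
  · have h := c10
    unfold Cg at h
    rw [show rList 10 = r10L from rfl]
    exact ⟨h, cop10⟩
  · have h := c11
    unfold Cg at h
    rw [show rList 11 = r11L from rfl]
    exact ⟨h, cop11⟩

instance : Fact (Nat.Prime 89) := ⟨by norm_num⟩

lemma dvd_pow_card_sub (g : R[X]) (hg : Irreducible g) :
    g ∣ X ^ (89 ^ g.natDegree) - X := by
  haveI : Fact (Irreducible g) := ⟨hg⟩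
  have hg0 : g ≠ 0 := hg.ne_zero
  let pb := AdjoinRoot.powerBasis hg0
  haveI : Fintype (AdjoinRoot g) := Module.fintypeOfFintype pb.basis
  have hcard : Fintype.card (AdjoinRoot g) = 89 ^ g.natDegree := by
    rw [Module.card_fintype pb.basis, ZMod.card, Fintype.card_fin]
    congr 1
  have hroot : (AdjoinRoot.root g) ^ (89 ^ g.natDegree) = AdjoinRoot.root g := by
    rw [← hcard]; exact FiniteField.pow_card _
  rw [← AdjoinRoot.mk_eq_zero]
  rw [map_sub, map_pow, AdjoinRoot.mk_X, hroot, sub_self]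

noncomputable def Pz : ℤ[X] :=
  C 2 * X ^ 22 - X ^ 19 + X ^ 16 + X ^ 15 - X ^ 14 - X ^ 12 + X ^ 11 - X ^ 10 - X ^ 8
    + X ^ 7 + X ^ 6 - X ^ 3 + C 2

lemma fP_eq : fP = C 2 * X ^ 22 - X ^ 19 + X ^ 16 + X ^ 15 - X ^ 14 - X ^ 12 + X ^ 11
    - X ^ 10 - X ^ 8 + X ^ 7 + X ^ 6 - X ^ 3 + C 2 := by
  show toPoly fL = _
  simp only [fL, toPoly, map_neg, map_one, map_zero, map_ofNat]
  ring

lemma fP_natDegree : fP.natDegree = 22 := by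
  rw [fP_eq]
  compute_degree!

lemma Pz_natDegree : Pz.natDegree = 22 := by
  rw [Pz]
  compute_degree!

lemma Pz_coeff11 : Pz.coeff 11 = 1 := by
  rw [Pz]
  simp [coeff_X_pow, coeff_C]

lemma map_Pz : Pz.map (Int.castRingHom R) = fP := by
  rw [fP_eq, Pz]
  simp only [Polynomial.map_add, Polynomial.map_sub, Polynomial.map_mul, Polynomial.map_pow,
    Polynomial.map_X, Polynomial.map_C, Polynomial.map_ofNat, map_ofNat]

lemma fP_irreducible : Irreducible fP := by
  have hdeg := fP_natDegree
  have hf0 : fP ≠ 0 := fun h => by simp [h] at hdeg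
  constructor
  · exact not_isUnit_of_natDegree_pos _ (by rw [hdeg]; norm_num)
  · intro a b hab
    by_contra hcon
    push_neg at hcon
    obtain ⟨ha, hb⟩ := hcon
    have ha0 : a ≠ 0 := fun h => hf0 (by rw [hab, h, zero_mul])
    have hb0 : b ≠ 0 := fun h => hf0 (by rw [hab, h, mul_zero])
    have hsum : a.natDegree + b.natDegree = 22 := by
      rw [← natDegree_mul ha0 hb0, ← hab, hdeg]
    have hda : 0 < a.natDegree := by
      rcases Nat.eq_zero_or_pos a.natDegree with h | h
      · exfalso
        apply ha
        rw [eq_C_of_natDegree_eq_zero h]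
        refine isUnit_C.mpr (Ne.isUnit ?_)
        intro hc
        exact ha0 (by rw [eq_C_of_natDegree_eq_zero h, hc, map_zero])
      · exact h
    have hdb : 0 < b.natDegree := by
      rcases Nat.eq_zero_or_pos b.natDegree with h | h
      · exfalso
        apply hb
        rw [eq_C_of_natDegree_eq_zero h]
        refine isUnit_C.mpr (Ne.isUnit ?_)
        intro hc
        exact hb0 (by rw [eq_C_of_natDegree_eq_zero h, hc, map_zero])
      · exact h
    obtain ⟨c, hcdvd, hdc1, hdc11⟩ : ∃ c : R[X], c ∣ fP ∧ 0 < c.natDegree ∧ c.natDegree ≤ 11 := by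
      rcases le_or_gt a.natDegree 11 with h | h
      · exact ⟨a, ⟨b, hab⟩, hda, h⟩
      · exact ⟨b, ⟨a, by rw [hab, mul_comm]⟩, hdb, by omega⟩
    have hc0 : c ≠ 0 := fun h => by simp [h] at hdc1
    obtain ⟨g, hgm, hgi, hgc⟩ := c.exists_monic_irreducible_factor
      (not_isUnit_of_natDegree_pos _ hdc1)
    have hgf : g ∣ fP := hgc.trans hcdvd
    have hge1 : 1 ≤ g.natDegree := hgi.natDegree_pos
    have hge11 : g.natDegree ≤ 11 := le_trans (natDegree_le_of_dvd hgc hc0) hdc11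
    obtain ⟨hcong, hcop⟩ := keyCong g.natDegree hge1 hge11
    have h1 : g ∣ X ^ (89 ^ g.natDegree) - X := dvd_pow_card_sub g hgi
    have h2 : g ∣ X ^ (89 ^ g.natDegree) - toPoly (rList g.natDegree) := dvd_trans hgf hcong
    have h3 : g ∣ toPoly (rList g.natDegree) - X := by
      have h := dvd_sub h1 h2
      have he : (X ^ (89 ^ g.natDegree) - X) - (X ^ (89 ^ g.natDegree)
          - toPoly (rList g.natDegree)) = toPoly (rList g.natDegree) - X := by ring
      rwa [he] at h
    exact hgi.not_isUnit (hcop.isUnit_of_dvd' hgf h3)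

lemma Pz_isPrimitive : Pz.IsPrimitive := by
  intro r hr
  obtain ⟨q, hq⟩ := hr
  have : Pz.coeff 11 = r * q.coeff 11 := by rw [hq, coeff_C_mul]
  rw [Pz_coeff11] at this
  exact isUnit_of_dvd_one ⟨q.coeff 11, this⟩

lemma Pz_irreducible : Irreducible Pz := by
  have hfi := fP_irreducible
  have key : ∀ a b : ℤ[X], Pz = a * b → IsUnit (a.map (Int.castRingHom R)) → IsUnit a := by
    intro a b hab hu
    have hP0 : Pz ≠ 0 := fun h => by have hd := Pz_natDegree; rw [h] at hd; simp at hd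
    have ha0 : a ≠ 0 := fun h => hP0 (by rw [hab, h, zero_mul])
    have hb0 : b ≠ 0 := fun h => hP0 (by rw [hab, h, mul_zero])
    have hsum : a.natDegree + b.natDegree = 22 := by
      rw [← natDegree_mul ha0 hb0, ← hab, Pz_natDegree]
    have hmab : (a.map (Int.castRingHom R)) * (b.map (Int.castRingHom R)) = fP := by
      rw [← Polynomial.map_mul, ← hab, map_Pz]
    have hmb0 : (b.map (Int.castRingHom R)) ≠ 0 := by
      intro h
      apply fP_irreducible.ne_zero
      rw [← hmab, h, mul_zero]
    have hma0 : (a.map (Int.castRingHom R)) ≠ 0 := by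
      intro h
      apply fP_irreducible.ne_zero
      rw [← hmab, h, zero_mul]
    have hmsum : (a.map (Int.castRingHom R)).natDegree + (b.map (Int.castRingHom R)).natDegree
        = 22 := by rw [← natDegree_mul hma0 hmb0, hmab, fP_natDegree]
    have hua : (a.map (Int.castRingHom R)).natDegree = 0 := natDegree_eq_zero_of_isUnit hu
    have hmbd : (b.map (Int.castRingHom R)).natDegree ≤ b.natDegree := natDegree_map_le
    have had : a.natDegree = 0 := by omega
    have hac : a = C (a.coeff 0) := eq_C_of_natDegree_eq_zero had
    have h11 : (1 : ℤ) = a.coeff 0 * b.coeff 11 := by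
      calc (1 : ℤ) = Pz.coeff 11 := Pz_coeff11.symm
        _ = (a * b).coeff 11 := by rw [hab]
        _ = (C (a.coeff 0) * b).coeff 11 := by rw [← hac]
        _ = a.coeff 0 * b.coeff 11 := coeff_C_mul _
    rw [hac]
    exact isUnit_C.mpr (isUnit_of_dvd_one ⟨b.coeff 11, h11⟩)
  constructor
  · exact not_isUnit_of_natDegree_pos _ (by rw [Pz_natDegree]; norm_num)
  · intro a b hab
    have hm : fP = (a.map (Int.castRingHom R)) * (b.map (Int.castRingHom R)) := by
      rw [← Polynomial.map_mul, ← hab, map_Pz]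
    rcases hfi.isUnit_or_isUnit hm with h | h
    · exact Or.inl (key a b hab h)
    · exact Or.inr (key b a (by rw [hab, mul_comm]) h)

end ChiE6Aux

/-- The characteristic polynomial of Frobenius for the `E_6` example. -/
noncomputable def chiE6 : ℚ[X] :=
  X ^ 22 - C (1/2) * X ^ 19 + C (1/2) * X ^ 16 + C (1/2) * X ^ 15 - C (1/2) * X ^ 14
    - C (1/2) * X ^ 12 + C (1/2) * X ^ 11 - C (1/2) * X ^ 10 - C (1/2) * X ^ 8
    + C (1/2) * X ^ 7 + C (1/2) * X ^ 6 - C (1/2) * X ^ 3 + 1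

/-- `chiE6` is irreducible over `ℚ`. -/
theorem chiE6_irreducible : Irreducible chiE6 := by
  have hprim := ChiE6Aux.Pz_isPrimitive
  have hirr := ChiE6Aux.Pz_irreducible
  have hmapped : Irreducible (ChiE6Aux.Pz.map (algebraMap ℤ ℚ)) :=
    (hprim.irreducible_iff_irreducible_map_fraction_map).mp hirr
  have hC : (2 : ℚ[X]) * C (1/2 : ℚ) = 1 := by
    rw [← map_ofNat (C : ℚ →+* ℚ[X]) 2, ← C_mul]; norm_num
  have heq : ChiE6Aux.Pz.map (algebraMap ℤ ℚ) = 2 * chiE6 := by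
    rw [ChiE6Aux.Pz, chiE6]
    simp only [Polynomial.map_add, Polynomial.map_sub, Polynomial.map_mul, Polynomial.map_pow,
      Polynomial.map_X, Polynomial.map_C, Polynomial.map_ofNat, map_ofNat]
    linear_combination -(-(X:ℚ[X]) ^ 19 + X ^ 16 + X ^ 15 - X ^ 14 - X ^ 12 + X ^ 11 - X ^ 10
      - X ^ 8 + X ^ 7 + X ^ 6 - X ^ 3) * hC
  rw [heq] at hmapped
  have hu : IsUnit (2 : ℚ[X]) := by
    rw [← map_ofNat (C : ℚ →+* ℚ[X]) 2]
    exact isUnit_C.mpr (by norm_num)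
  exact ((associated_unit_mul_left chiE6 _ hu)).irreducible hmapped
end

section
/- The polynomial χ(t) = t^22 - t^20 + (1/2)t^18 + (1/2)t^11 + (1/2)t^4 - t^2 + 1 has no monic irreducible factor in Q[t] that is a cyclotomic polynomial; equivalently, none of its complex roots is a root of unity. -/
open Polynomial

/-- The characteristic polynomial of Frobenius for the `T_{333}` example. -/
noncomputable def chiT333 : ℚ[X] :=
  X ^ 22 - X ^ 20 + C (1/2) * X ^ 18 + C (1/2) * X ^ 11 + C (1/2) * X ^ 4 - X ^ 2 + 1

private noncomputable def Fchi : ℤ[X] :=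
  C 2 * X ^ 22 - C 2 * X ^ 20 + X ^ 18 + X ^ 11 + X ^ 4 - C 2 * X ^ 2 + C 2

private lemma Fchi_map : Fchi.map (Int.castRingHom ℚ) = C 2 * chiT333 := by
  have h : (2 : ℚ[X]) * C (1/2 : ℚ) = 1 := by
    rw [← map_ofNat (C : ℚ →+* ℚ[X]) 2, ← C_mul]
    norm_num
  simp only [Fchi, chiT333, Polynomial.map_add, Polynomial.map_sub, Polynomial.map_mul,
    Polynomial.map_pow, Polynomial.map_X, map_C, map_ofNat, Polynomial.map_ofNat,
    map_intCast, Int.cast_ofNat]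
  linear_combination (-(X^4 + X^11 + X^18) : ℚ[X]) * h

private lemma chi_natDegree_le : chiT333.natDegree ≤ 22 := by
  unfold chiT333
  compute_degree

private lemma chi_ne_zero : chiT333 ≠ 0 := by
  intro h
  have : chiT333.eval 1 = 0 := by rw [h]; simp
  simp [chiT333] at this
  norm_num at this

private lemma chi_no_cyclo (n : ℕ) (hn : 1 ≤ n) : ¬ cyclotomic n ℚ ∣ chiT333 := by
  intro hdvd
  rcases eq_or_lt_of_le hn with h1 | h2
  · rw [← h1, cyclotomic_one] at hdvd
    have h0 : chiT333.eval 1 = 0 := by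
      have := eval_dvd (x := (1:ℚ)) hdvd
      simpa using this
    simp [chiT333] at h0
    norm_num at h0
  -- n ≥ 2
  have hφ : n.totient ≤ 22 := by
    have := Polynomial.natDegree_le_of_dvd hdvd chi_ne_zero
    rw [natDegree_cyclotomic] at this
    exact this.trans chi_natDegree_le
  have hdvdZ : cyclotomic n ℤ ∣ Fchi := by
    rw [← map_dvd_map (Int.castRingHom ℚ) ((Int.castRingHom ℚ).injective_int)
      (cyclotomic.monic n ℤ), map_cyclotomic, Fchi_map]
    exact Dvd.dvd.mul_left hdvd _
  set a : ℤ := (cyclotomic n ℤ).eval 2 with ha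
  have haF : a ∣ Fchi.eval 2 := eval_dvd hdvdZ
  have hF2 : Fchi.eval 2 = 2 * 3277829 := by norm_num [Fchi]
  have haodd : a ∣ 2 ^ n - 1 := by
    have := eval_dvd (x := (2:ℤ)) (cyclotomic.dvd_X_pow_sub_one n ℤ)
    simpa using this
  have h2a : ¬ (2 : ℤ) ∣ a := by
    intro h
    have h' : (2:ℤ) ∣ 2 ^ n - 1 := h.trans haodd
    have : (2:ℤ) ∣ 2 ^ n := dvd_pow_self 2 (by omega)
    omega
  set b : ℕ := a.natAbs with hb
  have hb6 : b ∣ 6555658 := by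
    have := Int.natAbs_dvd_natAbs.mpr haF
    rw [hF2] at this
    simpa using this
  have hbodd : ¬ 2 ∣ b := by
    intro h
    exact h2a (((Int.natCast_dvd_natCast.mpr h).trans (Int.natAbs_dvd.mpr dvd_rfl)))
  have h1a : (1:ℤ) < a := by
    have hlt := sub_one_pow_totient_lt_cyclotomic_eval h2 (q := (2:ℝ)) one_lt_two
    have heq : (cyclotomic n ℝ).eval 2 = (a : ℝ) := by
      rw [← map_cyclotomic_int n ℝ]
      have := eval_intCast_map (Int.castRingHom ℝ) (cyclotomic n ℤ) 2
      simpa using this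
    rw [heq] at hlt
    norm_num at hlt
    exact_mod_cast hlt
  have hp : Nat.Prime 3277829 := by norm_num
  have hbp : b ∣ 3277829 := by
    have hcop : Nat.Coprime b 2 := ((Nat.Prime.coprime_iff_not_dvd Nat.prime_two).mpr hbodd).symm
    exact hcop.dvd_of_dvd_mul_right (by rw [show 3277829 * 2 = 6555658 from by norm_num]; exact hb6)
  have hap' : a = 3277829 := by
    rcases hp.eq_one_or_self_of_dvd b hbp with h | h
    · have := Int.natAbs_eq a
      omega
    · have := Int.natAbs_eq a
      omega
  -- 2 is a root of cyclotomic n over ZMod p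
  haveI : Fact (Nat.Prime 3277829) := ⟨hp⟩
  have hpn : ¬ (3277829 ∣ n) := by
    intro h
    have hd := Nat.totient_dvd_of_dvd h
    rw [Nat.totient_prime hp] at hd
    have := Nat.le_of_dvd (Nat.totient_pos.mpr (by omega)) hd
    omega
  haveI : NeZero ((n : ZMod 3277829)) := ⟨by
    rw [Ne, ZMod.natCast_eq_zero_iff]
    exact hpn⟩
  have hroot : IsRoot (cyclotomic n (ZMod 3277829)) 2 := by
    have h0 : ((a : ZMod 3277829)) = 0 := by
      rw [ZMod.intCast_zmod_eq_zero_iff_dvd, hap']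
      norm_num
    have he : eval ((2:ℤ) : ZMod 3277829) (map (Int.castRingHom (ZMod 3277829)) (cyclotomic n ℤ))
        = ((eval (2:ℤ) (cyclotomic n ℤ) : ℤ) : ZMod 3277829) := by
      rw [eval_intCast_map]; rfl
    rw [IsRoot, ← map_cyclotomic_int n (ZMod 3277829),
      show (2 : ZMod 3277829) = ((2:ℤ) : ZMod 3277829) from by norm_num, he, ← ha, h0]
  have hprim : IsPrimitiveRoot (2 : ZMod 3277829) n := isRoot_cyclotomic_iff.mp hroot
  have hn2 : (2 : ZMod 3277829) ≠ 0 := by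
    intro h
    have : ((2:ℕ) : ZMod 3277829) = 0 := by exact_mod_cast h
    rw [ZMod.natCast_eq_zero_iff] at this
    omega
  have hndvd : n ∣ 3277828 := by
    have := ZMod.pow_card_sub_one_eq_one hn2
    exact hprim.dvd_of_pow_eq_one _ (by simpa using this)
  have hq : Nat.Prime 819457 := by norm_num
  have hqn : ¬ (819457 ∣ n) := by
    intro h
    have hd := Nat.totient_dvd_of_dvd h
    rw [Nat.totient_prime hq] at hd
    have := Nat.le_of_dvd (Nat.totient_pos.mpr (by omega)) hd
    omega
  have hn4 : n ∣ 4 := by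
    have hcop : Nat.Coprime n 819457 := ((Nat.Prime.coprime_iff_not_dvd hq).mpr hqn).symm
    exact hcop.dvd_of_dvd_mul_right
      (by rw [show 4 * 819457 = 3277828 from by norm_num]; exact hndvd)
  -- now a ∣ 2^4 - 1 = 15
  obtain ⟨k, hk⟩ := hn4
  have h15 : a ∣ 15 := by
    have : (2:ℤ) ^ n - 1 ∣ 2 ^ 4 - 1 := by
      have := sub_dvd_pow_sub_pow ((2:ℤ) ^ n) 1 k
      simpa [← pow_mul, ← hk] using this
    exact haodd.trans (by simpa using this)
  rw [hap'] at h15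
  norm_num at h15

/-- No complex root of `chiT333` is a root of unity; equivalently, no cyclotomic
polynomial divides it in `ℚ[t]`. -/
theorem chiT333_no_cyclotomic_factor :
    (∀ n : ℕ, 1 ≤ n → ¬ (cyclotomic n ℚ ∣ chiT333)) ∧
    (∀ z : ℂ, aeval z chiT333 = 0 → ∀ n : ℕ, 1 ≤ n → z ^ n ≠ 1) := by
  refine ⟨chi_no_cyclo, ?_⟩
  intro z hz n hn hzn
  have hfin : IsOfFinOrder z := isOfFinOrder_iff_pow_eq_one.mpr ⟨n, by omega, hzn⟩
  have hm : 0 < orderOf z := orderOf_pos_iff.mpr hfin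
  have hprim : IsPrimitiveRoot z (orderOf z) := IsPrimitiveRoot.orderOf z
  have hmin : cyclotomic (orderOf z) ℚ = minpoly ℚ z :=
    cyclotomic_eq_minpoly_rat hprim hm
  have hdvd : minpoly ℚ z ∣ chiT333 := minpoly.dvd ℚ z hz
  rw [← hmin] at hdvd
  exact chi_no_cyclo (orderOf z) hm hdvd
end

section
/- Let G ≤ GL(5,C) be the set of invertible 5×5 matrices (a_{ij})_{0≤i,j≤4} with a_{i0} = 0 for i = 1,2,3,4, a_{12} = a_{13} = a_{14} = 0, a_{21} = a_{23} = a_{24} = 0, a_{34} = a_{43} = 0, subject to a_{00}a_{11}a_{22} = 1 and a_{33}^2 a_{44} = 1. Then G is a subgroup of GL(5,C) (closed under multiplication and inverse) and is an 11-dimensional algebraic variety (its parametrization by the free entries a_{01},a_{02},a_{03},a_{04},a_{11},a_{22},a_{31},a_{32},a_{33},a_{41},a_{42} with a_{11},a_{22},a_{33} nonzero is injective with image G). -/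
open Matrix

/-- The stabilizer group `H_{u_{D_6}}`: invertible 5×5 matrices with the shape prescribed in
the `D_6` case, with `a₀₀a₁₁a₂₂ = 1` and `a₃₃²a₄₄ = 1`. -/
def GD6 : Set (Matrix (Fin 5) (Fin 5) ℂ) :=
  {A | A.det ≠ 0 ∧
    (∀ i : Fin 5, i ≠ 0 → A i 0 = 0) ∧
    A 1 2 = 0 ∧ A 1 3 = 0 ∧ A 1 4 = 0 ∧
    A 2 1 = 0 ∧ A 2 3 = 0 ∧ A 2 4 = 0 ∧
    A 3 4 = 0 ∧ A 4 3 = 0 ∧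
    A 0 0 * A 1 1 * A 2 2 = 1 ∧ A 3 3 ^ 2 * A 4 4 = 1}

/-- Parametrization of `GD6` by the 11 free entries
`(a₀₁,a₀₂,a₀₃,a₀₄,a₁₁,a₂₂,a₃₁,a₃₂,a₃₃,a₄₁,a₄₂)` (indices `0,…,10`), with `a₀₀` and `a₄₄`
determined by the two relations. -/
noncomputable def paramD6 (v : Fin 11 → ℂ) : Matrix (Fin 5) (Fin 5) ℂ :=
  !![(v 4 * v 5)⁻¹, v 0, v 1, v 2, v 3;
     0, v 4, 0, 0, 0;
     0, 0, v 5, 0, 0;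
     0, v 6, v 7, v 8, 0;
     0, v 9, v 10, 0, (v 8 ^ 2)⁻¹]

lemma one_mem_GD6 : (1 : Matrix (Fin 5) (Fin 5) ℂ) ∈ GD6 := by
  refine ⟨by simp, fun i hi => Matrix.one_apply_ne hi, ?_, ?_, ?_, ?_, ?_, ?_, ?_, ?_, ?_, ?_⟩ <;>
    simp [Matrix.one_apply]

lemma mul_mem_GD6 : ∀ A ∈ GD6, ∀ B ∈ GD6, A * B ∈ GD6 := by
  rintro A ⟨hdA, hcA, hA12, hA13, hA14, hA21, hA23, hA24, hA34, hA43, hA1, hA2⟩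
    B ⟨hdB, hcB, hB12, hB13, hB14, hB21, hB23, hB24, hB34, hB43, hB1, hB2⟩
  have hA10 := hcA 1 (by decide); have hA20 := hcA 2 (by decide)
  have hA30 := hcA 3 (by decide); have hA40 := hcA 4 (by decide)
  have hB10 := hcB 1 (by decide); have hB20 := hcB 2 (by decide)
  have hB30 := hcB 3 (by decide); have hB40 := hcB 4 (by decide)
  refine ⟨by simp [hdA, hdB], ?_, ?_, ?_, ?_, ?_, ?_, ?_, ?_, ?_, ?_, ?_⟩
  · intro i hi; fin_cases i
    · exact absurd rfl hi
    all_goals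
      simp [Matrix.mul_apply, Fin.sum_univ_five, hA10, hA20, hA30, hA40, hB10, hB20, hB30, hB40]
  all_goals
    simp only [Matrix.mul_apply, Fin.sum_univ_five, hA10, hA20, hA30, hA40, hB10, hB20, hB30,
      hB40, hA12, hA13, hA14, hA21, hA23, hA24, hA34, hA43, hB12, hB13, hB14, hB21, hB23, hB24,
      hB34, hB43, zero_mul, mul_zero, add_zero, zero_add]
  · linear_combination B 0 0 * B 1 1 * B 2 2 * hA1 + hB1
  · linear_combination B 3 3 ^ 2 * B 4 4 * hA2 + hB2

set_option maxHeartbeats 4000000 in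
lemma inv_mem_GD6 : ∀ A ∈ GD6, A⁻¹ ∈ GD6 := by
  rintro A ⟨hdA, hcA, hA12, hA13, hA14, hA21, hA23, hA24, hA34, hA43, hA1, hA2⟩
  have hA10 := hcA 1 (by decide); have hA20 := hcA 2 (by decide)
  have hA30 := hcA 3 (by decide); have hA40 := hcA 4 (by decide)
  have h1ne : A 0 0 * A 1 1 * A 2 2 ≠ 0 := hA1 ▸ one_ne_zero
  have h2ne : A 3 3 ^ 2 * A 4 4 ≠ 0 := hA2 ▸ one_ne_zero
  have h00 : A 0 0 ≠ 0 := left_ne_zero_of_mul (left_ne_zero_of_mul h1ne)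
  have h11 : A 1 1 ≠ 0 := right_ne_zero_of_mul (left_ne_zero_of_mul h1ne)
  have h22 : A 2 2 ≠ 0 := right_ne_zero_of_mul h1ne
  have h33 : A 3 3 ≠ 0 := pow_ne_zero_iff (n := 2) (by norm_num) |>.mp (left_ne_zero_of_mul h2ne)
  have h44 : A 4 4 ≠ 0 := right_ne_zero_of_mul h2ne
  have e0 := mul_inv_cancel₀ h00
  have e1 := mul_inv_cancel₀ h11
  have e2 := mul_inv_cancel₀ h22
  have e3 := mul_inv_cancel₀ h33
  have e4 := mul_inv_cancel₀ h44
  set B : Matrix (Fin 5) (Fin 5) ℂ :=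
    !![(A 0 0)⁻¹,
       -(A 0 1 * (A 0 0)⁻¹ * (A 1 1)⁻¹) + A 0 3 * A 3 1 * ((A 0 0)⁻¹ * (A 1 1)⁻¹ * (A 3 3)⁻¹)
          + A 0 4 * A 4 1 * ((A 0 0)⁻¹ * (A 1 1)⁻¹ * (A 4 4)⁻¹),
       -(A 0 2 * (A 0 0)⁻¹ * (A 2 2)⁻¹) + A 0 3 * A 3 2 * ((A 0 0)⁻¹ * (A 2 2)⁻¹ * (A 3 3)⁻¹)
          + A 0 4 * A 4 2 * ((A 0 0)⁻¹ * (A 2 2)⁻¹ * (A 4 4)⁻¹),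
       -(A 0 0)⁻¹ * A 0 3 * (A 3 3)⁻¹,
       -(A 0 0)⁻¹ * A 0 4 * (A 4 4)⁻¹;
       0, (A 1 1)⁻¹, 0, 0, 0;
       0, 0, (A 2 2)⁻¹, 0, 0;
       0, -A 3 1 * ((A 1 1)⁻¹ * (A 3 3)⁻¹), -A 3 2 * ((A 2 2)⁻¹ * (A 3 3)⁻¹), (A 3 3)⁻¹, 0;
       0, -A 4 1 * ((A 1 1)⁻¹ * (A 4 4)⁻¹), -A 4 2 * ((A 2 2)⁻¹ * (A 4 4)⁻¹), 0, (A 4 4)⁻¹]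
    with hB
  have hAB : A * B = 1 := by
    ext i j
    fin_cases i <;> fin_cases j <;>
      simp [hB, Matrix.mul_apply, Fin.sum_univ_five, Matrix.one_apply, Matrix.vecHead,
        Matrix.vecTail, hA10, hA20, hA30, hA40, hA12, hA13, hA14, hA21, hA23, hA24, hA34, hA43]
    · linear_combination e0
    · linear_combination (-(A 0 1 * (A 1 1)⁻¹) + A 0 3 * A 3 1 * ((A 1 1)⁻¹ * (A 3 3)⁻¹)
        + A 0 4 * A 4 1 * ((A 1 1)⁻¹ * (A 4 4)⁻¹)) * e0
    · linear_combination (-(A 0 2 * (A 2 2)⁻¹) + A 0 3 * A 3 2 * ((A 2 2)⁻¹ * (A 3 3)⁻¹)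
        + A 0 4 * A 4 2 * ((A 2 2)⁻¹ * (A 4 4)⁻¹)) * e0
    · linear_combination (-(A 0 3 * (A 3 3)⁻¹)) * e0
    · linear_combination (-(A 0 4 * (A 4 4)⁻¹)) * e0
    · linear_combination e1
    · linear_combination e2
    · linear_combination (-(A 3 1 * (A 1 1)⁻¹)) * e3
    · linear_combination (-(A 3 2 * (A 2 2)⁻¹)) * e3
    · linear_combination e3
    · linear_combination (-(A 4 1 * (A 1 1)⁻¹)) * e4
    · linear_combination (-(A 4 2 * (A 2 2)⁻¹)) * e4
    · linear_combination e4
  have hInv : A⁻¹ = B := Matrix.inv_eq_right_inv hAB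
  have hdB : B.det ≠ 0 := Matrix.det_ne_zero_of_left_inverse hAB
  rw [hInv]
  refine ⟨hdB, ?_, ?_, ?_, ?_, ?_, ?_, ?_, ?_, ?_, ?_, ?_⟩
  · intro i hi; fin_cases i
    · exact absurd rfl hi
    all_goals simp [hB, Matrix.vecHead, Matrix.vecTail]
  all_goals simp [hB, Matrix.vecHead, Matrix.vecTail]
  · rw [← mul_inv, ← mul_inv, hA1, inv_one]
  · rw [← mul_inv, hA2, inv_one]

lemma injOn_paramD6 : Set.InjOn paramD6 {v | v 4 ≠ 0 ∧ v 5 ≠ 0 ∧ v 8 ≠ 0} := by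
  intro u _ v _ h
  have H : ∀ i j, paramD6 u i j = paramD6 v i j := fun i j => congrFun (congrFun h i) j
  funext i
  fin_cases i
  · simpa [paramD6] using H 0 1
  · simpa [paramD6] using H 0 2
  · simpa [paramD6] using H 0 3
  · simpa [paramD6] using H 0 4
  · simpa [paramD6] using H 1 1
  · simpa [paramD6] using H 2 2
  · simpa [paramD6] using H 3 1
  · simpa [paramD6] using H 3 2
  · simpa [paramD6] using H 3 3
  · simpa [paramD6] using H 4 1
  · simpa [paramD6] using H 4 2

set_option maxHeartbeats 1000000 in
lemma det_paramD6 (v : Fin 11 → ℂ) (h4 : v 4 ≠ 0) (h5 : v 5 ≠ 0) (h8 : v 8 ≠ 0) :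
    (paramD6 v).det = (v 8)⁻¹ := by
  simp [paramD6, Matrix.det_succ_row_zero, Fin.sum_univ_succ]
  field_simp

set_option maxHeartbeats 1000000 in
lemma image_paramD6 : paramD6 '' {v | v 4 ≠ 0 ∧ v 5 ≠ 0 ∧ v 8 ≠ 0} = GD6 := by
  ext A
  constructor
  · rintro ⟨v, ⟨h4, h5, h8⟩, rfl⟩
    refine ⟨?_, ?_, ?_, ?_, ?_, ?_, ?_, ?_, ?_, ?_, ?_, ?_⟩
    · rw [det_paramD6 v h4 h5 h8]; exact inv_ne_zero h8
    · intro i hi; fin_cases i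
      · exact absurd rfl hi
      all_goals simp [paramD6, Matrix.vecHead, Matrix.vecTail]
    all_goals simp [paramD6, Matrix.vecHead, Matrix.vecTail]
    · field_simp
    · exact mul_inv_cancel₀ (pow_ne_zero 2 h8)
  · rintro ⟨hdA, hcA, hA12, hA13, hA14, hA21, hA23, hA24, hA34, hA43, hA1, hA2⟩
    have hA10 := hcA 1 (by decide); have hA20 := hcA 2 (by decide)
    have hA30 := hcA 3 (by decide); have hA40 := hcA 4 (by decide)
    have h1ne : A 0 0 * A 1 1 * A 2 2 ≠ 0 := hA1 ▸ one_ne_zero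
    have h2ne : A 3 3 ^ 2 * A 4 4 ≠ 0 := hA2 ▸ one_ne_zero
    have h00 : A 0 0 ≠ 0 := left_ne_zero_of_mul (left_ne_zero_of_mul h1ne)
    have h11 : A 1 1 ≠ 0 := right_ne_zero_of_mul (left_ne_zero_of_mul h1ne)
    have h22 : A 2 2 ≠ 0 := right_ne_zero_of_mul h1ne
    have h33 : A 3 3 ≠ 0 :=
      pow_ne_zero_iff (n := 2) (by norm_num) |>.mp (left_ne_zero_of_mul h2ne)
    have hc00 : (A 1 1 * A 2 2)⁻¹ = A 0 0 := by
      field_simp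
      first | linear_combination hA1 | linear_combination -hA1
    have hc44 : (A 3 3 ^ 2)⁻¹ = A 4 4 := by
      have h2 : A 3 3 ^ 2 ≠ 0 := pow_ne_zero 2 h33
      field_simp
      first | linear_combination hA2 | linear_combination -hA2
    have hc00' : (A 2 2)⁻¹ * (A 1 1)⁻¹ = A 0 0 := by
      rw [← mul_inv, mul_comm]; exact hc00
    set w : Fin 11 → ℂ :=
      ![A 0 1, A 0 2, A 0 3, A 0 4, A 1 1, A 2 2, A 3 1, A 3 2, A 3 3, A 4 1, A 4 2] with hw
    have V0 : w 0 = A 0 1 := rfl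
    have V1 : w 1 = A 0 2 := rfl
    have V2 : w 2 = A 0 3 := rfl
    have V3 : w 3 = A 0 4 := rfl
    have V4 : w 4 = A 1 1 := rfl
    have V5 : w 5 = A 2 2 := rfl
    have V6 : w 6 = A 3 1 := rfl
    have V7 : w 7 = A 3 2 := rfl
    have V8 : w 8 = A 3 3 := rfl
    have V9 : w 9 = A 4 1 := rfl
    have V10 : w 10 = A 4 2 := rfl
    refine ⟨w, ⟨by rw [V4]; exact h11, by rw [V5]; exact h22, by rw [V8]; exact h33⟩, ?_⟩
    ext i j
    fin_cases i <;> fin_cases j <;>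
      simp [paramD6, Matrix.vecHead, Matrix.vecTail, V0, V1, V2, V3, V4, V5, V6, V7, V8, V9,
        V10, hA10, hA20, hA30, hA40, hA12, hA13, hA14, hA21, hA23, hA24, hA34, hA43, hc00,
        hc00', hc44]

/-- `GD6` is a subgroup of `GL(5,ℂ)` (contains the identity, closed under products and
inverses), and it is an 11-dimensional variety: the parametrization by the 11 free entries
(with `a₁₁, a₂₂, a₃₃` nonzero) is injective with image `GD6`. -/
theorem GD6_subgroup_and_dimension :
    (1 : Matrix (Fin 5) (Fin 5) ℂ) ∈ GD6 ∧
    (∀ A ∈ GD6, ∀ B ∈ GD6, A * B ∈ GD6) ∧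
    (∀ A ∈ GD6, A⁻¹ ∈ GD6) ∧
    Set.InjOn paramD6 {v | v 4 ≠ 0 ∧ v 5 ≠ 0 ∧ v 8 ≠ 0} ∧
    paramD6 '' {v | v 4 ≠ 0 ∧ v 5 ≠ 0 ∧ v 8 ≠ 0} = GD6 :=
  ⟨one_mem_GD6, mul_mem_GD6, inv_mem_GD6, injOn_paramD6, image_paramD6⟩
end
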